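/- arXiv:1412.5845 — 6 statements merged into one kernel-verified Lean document; each statement's English description precedes it below -/
import Mathlib

section
/- For every n and every measurable function f : ℝ^d → ℝ, one has ∫ ρ_n(x) |f(x)|² dx ≤ exp( 2 |ΔZ_n| ‖h‖_∞ + (Δt_n/2) ‖h‖_∞² ) ∫ ρ_{n−1}(x) |f(x)|² dx. In particular, if f is square-integrable with respect to ρ_{n−1} then it is square-integrable with respect to ρ_n, and if ρ_0 has finite second moment then so does every ρ_n. -/
open MeasureTheory Real

/-- Bayes recursion with weights `exp(H_n)`, `H_n(x) = h(x) ΔZ_n - (Δt_n/2) h(x)²`.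
The `n`-th step uses the increments `ΔZ n`, `Δt n` (0-indexed), so `bayesH … n`
plays the role of `ρ_n`. -/
noncomputable def bayesH {d : ℕ} (h ρ₀ : EuclideanSpace ℝ (Fin d) → ℝ) (ΔZ Δt : ℕ → ℝ) :
    ℕ → EuclideanSpace ℝ (Fin d) → ℝ
  | 0 => ρ₀
  | n + 1 => fun x =>
      bayesH h ρ₀ ΔZ Δt n x * Real.exp (h x * ΔZ n - Δt n / 2 * h x ^ 2) /
        ∫ y, bayesH h ρ₀ ΔZ Δt n y * Real.exp (h y * ΔZ n - Δt n / 2 * h y ^ 2)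

/-- **Transfer of second moments along the Bayes recursion.**  For every `n` and every
measurable `f`,
`∫ ρ_{n+1} |f|² ≤ exp(2 |ΔZ_{n+1}| ‖h‖_∞ + (Δt_{n+1}/2) ‖h‖_∞²) ∫ ρ_n |f|²`;
in particular square-integrability w.r.t. `ρ_n` implies square-integrability w.r.t.
`ρ_{n+1}`, and a finite second moment of `ρ_0` propagates to every `ρ_n`. -/
theorem bayes_L2_transfer
    {d : ℕ} (h ρ₀ : EuclideanSpace ℝ (Fin d) → ℝ) (ΔZ Δt : ℕ → ℝ)
    (hΔt : ∀ n, 0 < Δt n)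
    (hhm : Measurable h) (C : ℝ) (hhb : ∀ x, |h x| ≤ C)
    (hρm : Measurable ρ₀) (hρnn : ∀ x, 0 ≤ ρ₀ x)
    (hρint : Integrable ρ₀) (hρ1 : ∫ x, ρ₀ x = 1) :
    (∀ n : ℕ, ∀ f : EuclideanSpace ℝ (Fin d) → ℝ, Measurable f →
      ∫ x, bayesH h ρ₀ ΔZ Δt (n + 1) x * |f x| ^ 2 ≤
        Real.exp (2 * |ΔZ n| * C + Δt n / 2 * C ^ 2) *
          ∫ x, bayesH h ρ₀ ΔZ Δt n x * |f x| ^ 2) ∧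
    (∀ n : ℕ, ∀ f : EuclideanSpace ℝ (Fin d) → ℝ, Measurable f →
      Integrable (fun x => bayesH h ρ₀ ΔZ Δt n x * |f x| ^ 2) →
      Integrable (fun x => bayesH h ρ₀ ΔZ Δt (n + 1) x * |f x| ^ 2)) ∧
    (Integrable (fun x => ρ₀ x * ‖x‖ ^ 2) →
      ∀ n : ℕ, Integrable (fun x => bayesH h ρ₀ ΔZ Δt n x * ‖x‖ ^ 2)) := by
  classical
  have hC : (0:ℝ) ≤ C := le_trans (abs_nonneg _) (hhb 0)
  set ρ : ℕ → EuclideanSpace ℝ (Fin d) → ℝ := bayesH h ρ₀ ΔZ Δt with hρdef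
  set g : ℕ → EuclideanSpace ℝ (Fin d) → ℝ :=
    fun n x => Real.exp (h x * ΔZ n - Δt n / 2 * h x ^ 2) with hgdef
  have hrec : ∀ (n : ℕ) (x : EuclideanSpace ℝ (Fin d)),
      ρ (n + 1) x = ρ n x * g n x / ∫ y, ρ n y * g n y := fun n x => rfl
  have hgm : ∀ n : ℕ, Measurable (g n) := by
    intro n
    exact ((hhm.mul_const _).sub ((hhm.pow_const 2).const_mul _)).exp
  have hgpos : ∀ n x, 0 < g n x := fun n x => Real.exp_pos _
  have hsq : ∀ x, h x ^ 2 ≤ C ^ 2 := by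
    intro x; have := abs_le.1 (hhb x); nlinarith [this.1, this.2]
  have hgub : ∀ n x, g n x ≤ Real.exp (|ΔZ n| * C) := by
    intro n x
    apply Real.exp_le_exp.2
    have h1 : h x * ΔZ n ≤ |ΔZ n| * C := by
      calc h x * ΔZ n ≤ |h x * ΔZ n| := le_abs_self _
        _ = |h x| * |ΔZ n| := abs_mul _ _
        _ ≤ C * |ΔZ n| := mul_le_mul_of_nonneg_right (hhb x) (abs_nonneg _)
        _ = |ΔZ n| * C := mul_comm _ _
    nlinarith [sq_nonneg (h x), (hΔt n).le]
  have hglb : ∀ n x, Real.exp (-(|ΔZ n| * C + Δt n / 2 * C ^ 2)) ≤ g n x := by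
    intro n x
    apply Real.exp_le_exp.2
    have h1 : -(|ΔZ n| * C) ≤ h x * ΔZ n := by
      have h2 : |h x * ΔZ n| ≤ |ΔZ n| * C := by
        rw [abs_mul]
        calc |h x| * |ΔZ n| ≤ C * |ΔZ n| := mul_le_mul_of_nonneg_right (hhb x) (abs_nonneg _)
          _ = |ΔZ n| * C := mul_comm _ _
      linarith [neg_abs_le (h x * ΔZ n)]
    nlinarith [hsq x, (hΔt n).le, sq_nonneg (h x)]
  -- induction invariant
  have key : ∀ n : ℕ, Measurable (ρ n) ∧ (∀ x, 0 ≤ ρ n x) ∧ Integrable (ρ n) ∧ ∫ x, ρ n x = 1 := by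
    intro n
    induction n with
    | zero => exact ⟨hρm, hρnn, hρint, hρ1⟩
    | succ n ih =>
      obtain ⟨hm, hnn, hint, h1⟩ := ih
      have hρgm : Measurable (fun y => ρ n y * g n y) := hm.mul (hgm n)
      have hρgnn : ∀ y, 0 ≤ ρ n y * g n y := fun y => mul_nonneg (hnn y) (hgpos n y).le
      have hρgint : Integrable (fun y => ρ n y * g n y) := by
        refine Integrable.mono' (hint.const_mul (Real.exp (|ΔZ n| * C)))
          hρgm.aestronglyMeasurable (Filter.Eventually.of_forall fun y => ?_)
        rw [Real.norm_eq_abs, abs_of_nonneg (hρgnn y)]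
        calc ρ n y * g n y ≤ ρ n y * Real.exp (|ΔZ n| * C) :=
              mul_le_mul_of_nonneg_left (hgub n y) (hnn y)
          _ = Real.exp (|ΔZ n| * C) * ρ n y := mul_comm _ _
      have hZlb : Real.exp (-(|ΔZ n| * C + Δt n / 2 * C ^ 2)) ≤ ∫ y, ρ n y * g n y := by
        calc Real.exp (-(|ΔZ n| * C + Δt n / 2 * C ^ 2))
            = ∫ y, Real.exp (-(|ΔZ n| * C + Δt n / 2 * C ^ 2)) * ρ n y := by
              rw [integral_const_mul, h1, mul_one]
          _ ≤ ∫ y, ρ n y * g n y := by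
              refine integral_mono (hint.const_mul _) hρgint fun y => ?_
              calc Real.exp (-(|ΔZ n| * C + Δt n / 2 * C ^ 2)) * ρ n y
                  = ρ n y * Real.exp (-(|ΔZ n| * C + Δt n / 2 * C ^ 2)) := mul_comm _ _
                _ ≤ ρ n y * g n y := mul_le_mul_of_nonneg_left (hglb n y) (hnn y)
      have hZpos : 0 < ∫ y, ρ n y * g n y := lt_of_lt_of_le (Real.exp_pos _) hZlb
      refine ⟨?_, ?_, ?_, ?_⟩
      · have : ρ (n + 1) = fun x => ρ n x * g n x / ∫ y, ρ n y * g n y := funext (hrec n)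
        rw [this]
        exact hρgm.div_const _
      · intro x; rw [hrec n x]; exact div_nonneg (hρgnn x) hZpos.le
      · have : ρ (n + 1) = fun x => (∫ y, ρ n y * g n y)⁻¹ * (ρ n x * g n x) := by
          funext x; rw [hrec n x]; ring
        rw [this]
        exact hρgint.const_mul _
      · have h2 : (fun x => ρ (n + 1) x) = fun x => (∫ y, ρ n y * g n y)⁻¹ * (ρ n x * g n x) := by
          funext x; rw [hrec n x]; ring
        rw [h2, integral_const_mul, inv_mul_cancel₀ hZpos.ne']
  -- now positivity of Z for each n
  have hZlb : ∀ n, Real.exp (-(|ΔZ n| * C + Δt n / 2 * C ^ 2)) ≤ ∫ y, ρ n y * g n y := by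
    intro n
    obtain ⟨hm, hnn, hint, h1⟩ := key n
    have hρgint : Integrable (fun y => ρ n y * g n y) := by
      refine Integrable.mono' (hint.const_mul (Real.exp (|ΔZ n| * C)))
        (hm.mul (hgm n)).aestronglyMeasurable (Filter.Eventually.of_forall fun y => ?_)
      rw [Real.norm_eq_abs, abs_of_nonneg (mul_nonneg (hnn y) (hgpos n y).le)]
      calc ρ n y * g n y ≤ ρ n y * Real.exp (|ΔZ n| * C) :=
            mul_le_mul_of_nonneg_left (hgub n y) (hnn y)
        _ = Real.exp (|ΔZ n| * C) * ρ n y := mul_comm _ _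
    calc Real.exp (-(|ΔZ n| * C + Δt n / 2 * C ^ 2))
        = ∫ y, Real.exp (-(|ΔZ n| * C + Δt n / 2 * C ^ 2)) * ρ n y := by
          rw [integral_const_mul, h1, mul_one]
      _ ≤ ∫ y, ρ n y * g n y := by
          refine integral_mono (hint.const_mul _) hρgint fun y => ?_
          calc Real.exp (-(|ΔZ n| * C + Δt n / 2 * C ^ 2)) * ρ n y
              = ρ n y * Real.exp (-(|ΔZ n| * C + Δt n / 2 * C ^ 2)) := mul_comm _ _
            _ ≤ ρ n y * g n y := mul_le_mul_of_nonneg_left (hglb n y) (hnn y)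
  have hZpos : ∀ n, 0 < ∫ y, ρ n y * g n y := fun n => lt_of_lt_of_le (Real.exp_pos _) (hZlb n)
  -- pointwise comparison both ways
  have hcomp1 : ∀ n (f : EuclideanSpace ℝ (Fin d) → ℝ) x,
      ρ (n + 1) x * |f x| ^ 2 ≤
        (Real.exp (|ΔZ n| * C) / ∫ y, ρ n y * g n y) * (ρ n x * |f x| ^ 2) := by
    intro n f x
    rw [hrec n x]
    have h1 : ρ n x * g n x ≤ ρ n x * Real.exp (|ΔZ n| * C) :=
      mul_le_mul_of_nonneg_left (hgub n x) ((key n).2.1 x)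
    have h2 : (0:ℝ) < ∫ y, ρ n y * g n y := hZpos n
    have h3 : (0:ℝ) ≤ |f x| ^ 2 := sq_nonneg _
    rw [div_mul_eq_mul_div, div_mul_eq_mul_div, div_le_div_iff_of_pos_right h2]
    nlinarith [(key n).2.1 x]
  have hcomp2 : ∀ n (f : EuclideanSpace ℝ (Fin d) → ℝ) x,
      ρ n x * |f x| ^ 2 ≤
        (Real.exp (|ΔZ n| * C + Δt n / 2 * C ^ 2) * ∫ y, ρ n y * g n y) *
          (ρ (n + 1) x * |f x| ^ 2) := by
    intro n f x
    rw [hrec n x]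
    have hz : (∫ y, ρ n y * g n y) ≠ 0 := (hZpos n).ne'
    have h6 : (0:ℝ) < Real.exp (|ΔZ n| * C + Δt n / 2 * C ^ 2) := Real.exp_pos _
    have h4 : ρ n x * Real.exp (-(|ΔZ n| * C + Δt n / 2 * C ^ 2)) ≤ ρ n x * g n x :=
      mul_le_mul_of_nonneg_left (hglb n x) ((key n).2.1 x)
    rw [Real.exp_neg] at h4
    have key2 : ρ n x ≤ Real.exp (|ΔZ n| * C + Δt n / 2 * C ^ 2) * (ρ n x * g n x) := by
      calc ρ n x = Real.exp (|ΔZ n| * C + Δt n / 2 * C ^ 2) *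
            (ρ n x * (Real.exp (|ΔZ n| * C + Δt n / 2 * C ^ 2))⁻¹) := by
            field_simp
        _ ≤ Real.exp (|ΔZ n| * C + Δt n / 2 * C ^ 2) * (ρ n x * g n x) :=
            mul_le_mul_of_nonneg_left h4 h6.le
    have heq : (Real.exp (|ΔZ n| * C + Δt n / 2 * C ^ 2) * ∫ y, ρ n y * g n y) *
        (ρ n x * g n x / (∫ y, ρ n y * g n y) * |f x| ^ 2) =
        Real.exp (|ΔZ n| * C + Δt n / 2 * C ^ 2) * (ρ n x * g n x) * |f x| ^ 2 := by
      field_simp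
    rw [heq]
    exact mul_le_mul_of_nonneg_right key2 (sq_nonneg _)
  -- part 2 : integrability transfer (forwards)
  have part2 : ∀ (n : ℕ) (f : EuclideanSpace ℝ (Fin d) → ℝ), Measurable f →
      Integrable (fun x => ρ n x * |f x| ^ 2) →
      Integrable (fun x => ρ (n + 1) x * |f x| ^ 2) := by
    intro n f hfm hI
    refine Integrable.mono'
      (hI.const_mul (Real.exp (|ΔZ n| * C) / ∫ y, ρ n y * g n y))
      (((key (n + 1)).1.mul ((hfm.abs.pow_const 2))).aestronglyMeasurable)
      (Filter.Eventually.of_forall fun x => ?_)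
    rw [Real.norm_eq_abs,
      abs_of_nonneg (mul_nonneg ((key (n + 1)).2.1 x) (sq_nonneg _))]
    exact hcomp1 n f x
  -- backwards transfer
  have part2' : ∀ (n : ℕ) (f : EuclideanSpace ℝ (Fin d) → ℝ), Measurable f →
      Integrable (fun x => ρ (n + 1) x * |f x| ^ 2) →
      Integrable (fun x => ρ n x * |f x| ^ 2) := by
    intro n f hfm hI
    refine Integrable.mono'
      (hI.const_mul (Real.exp (|ΔZ n| * C + Δt n / 2 * C ^ 2) * ∫ y, ρ n y * g n y))
      (((key n).1.mul ((hfm.abs.pow_const 2))).aestronglyMeasurable)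
      (Filter.Eventually.of_forall fun x => ?_)
    rw [Real.norm_eq_abs, abs_of_nonneg (mul_nonneg ((key n).2.1 x) (sq_nonneg _))]
    exact hcomp2 n f x
  -- part 1
  have part1 : ∀ (n : ℕ) (f : EuclideanSpace ℝ (Fin d) → ℝ), Measurable f →
      ∫ x, ρ (n + 1) x * |f x| ^ 2 ≤
        Real.exp (2 * |ΔZ n| * C + Δt n / 2 * C ^ 2) * ∫ x, ρ n x * |f x| ^ 2 := by
    intro n f hfm
    by_cases hI : Integrable (fun x => ρ n x * |f x| ^ 2)
    · obtain ⟨hm, hnn, hint, h1⟩ := key n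
      have hFg_int : Integrable (fun x => ρ n x * g n x * |f x| ^ 2) := by
        refine Integrable.mono' (hI.const_mul (Real.exp (|ΔZ n| * C)))
          ((hm.mul (hgm n)).mul (hfm.abs.pow_const 2)).aestronglyMeasurable
          (Filter.Eventually.of_forall fun x => ?_)
        rw [Real.norm_eq_abs,
          abs_of_nonneg (mul_nonneg (mul_nonneg (hnn x) (hgpos n x).le) (sq_nonneg _))]
        calc ρ n x * g n x * |f x| ^ 2
            ≤ ρ n x * Real.exp (|ΔZ n| * C) * |f x| ^ 2 :=
              mul_le_mul_of_nonneg_right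
                (mul_le_mul_of_nonneg_left (hgub n x) (hnn x)) (sq_nonneg _)
          _ = Real.exp (|ΔZ n| * C) * (ρ n x * |f x| ^ 2) := by ring
      have hrw : (fun x => ρ (n + 1) x * |f x| ^ 2) =
          fun x => (∫ y, ρ n y * g n y)⁻¹ * (ρ n x * g n x * |f x| ^ 2) := by
        funext x; rw [hrec n x]; ring
      rw [hrw, integral_const_mul]
      have h2 : ∫ x, ρ n x * g n x * |f x| ^ 2 ≤
          Real.exp (|ΔZ n| * C) * ∫ x, ρ n x * |f x| ^ 2 := by
        rw [← integral_const_mul]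
        refine integral_mono hFg_int (hI.const_mul _) fun x => ?_
        calc ρ n x * g n x * |f x| ^ 2
            ≤ ρ n x * Real.exp (|ΔZ n| * C) * |f x| ^ 2 :=
              mul_le_mul_of_nonneg_right
                (mul_le_mul_of_nonneg_left (hgub n x) (hnn x)) (sq_nonneg _)
          _ = Real.exp (|ΔZ n| * C) * (ρ n x * |f x| ^ 2) := by ring
      have h3 : (∫ y, ρ n y * g n y)⁻¹ ≤ Real.exp (|ΔZ n| * C + Δt n / 2 * C ^ 2) := by
        have := inv_anti₀ (Real.exp_pos _) (hZlb n)
        rwa [← Real.exp_neg, neg_neg] at this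
      have h4 : (0:ℝ) ≤ ∫ x, ρ n x * g n x * |f x| ^ 2 :=
        integral_nonneg fun x => mul_nonneg (mul_nonneg (hnn x) (hgpos n x).le) (sq_nonneg _)
      calc (∫ y, ρ n y * g n y)⁻¹ * ∫ x, ρ n x * g n x * |f x| ^ 2
          ≤ Real.exp (|ΔZ n| * C + Δt n / 2 * C ^ 2) *
              (Real.exp (|ΔZ n| * C) * ∫ x, ρ n x * |f x| ^ 2) :=
            mul_le_mul h3 h2 h4 (Real.exp_pos _).le
        _ = Real.exp (2 * |ΔZ n| * C + Δt n / 2 * C ^ 2) * ∫ x, ρ n x * |f x| ^ 2 := by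
            rw [← mul_assoc, ← Real.exp_add]
            congr 2
            ring
    · have hI' : ¬ Integrable (fun x => ρ (n + 1) x * |f x| ^ 2) := fun hc =>
        hI (part2' n f hfm hc)
      rw [integral_undef hI, integral_undef hI', mul_zero]
  refine ⟨part1, part2, ?_⟩
  intro h2m n
  induction n with
  | zero => exact h2m
  | succ n ih =>
    have := part2 n (fun x => ‖x‖) measurable_norm (by simpa [abs_norm] using ih)
    simpa [abs_norm] using this
end

section
/- Suppose ρ_0 satisfies PI(λ_0) for some λ_0 > 0, and suppose there are constants M, T > 0 with |ΔZ_1 + … + ΔZ_n| ≤ M and Δt_1 + … + Δt_n ≤ T for all n ≤ N. Then every density ρ_n produced by the Bayes recursion satisfies PI(λ̄) with the uniform constant λ̄ = λ_0 exp( −( 2 M ‖h‖_∞ + T ‖h‖_∞² ) ). -/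
open MeasureTheory Real

/-- A probability density `ρ` on `ℝ^d` satisfies the Poincaré inequality `PI(λ)`:
for every `C¹` function `f` with `f ∈ L²(ρ)`, `∇f ∈ L²(ρ)` and `∫ f ρ = 0`,
`∫ f² ρ ≤ (1/λ) ∫ |∇f|² ρ`. -/
def PoincareIneq {d : ℕ} (ρ : EuclideanSpace ℝ (Fin d) → ℝ) (lam : ℝ) : Prop :=
  ∀ f : EuclideanSpace ℝ (Fin d) → ℝ, ContDiff ℝ 1 f →
    Integrable (fun x => f x ^ 2 * ρ x) →
    Integrable (fun x => ‖gradient f x‖ ^ 2 * ρ x) →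
    (∫ x, f x * ρ x) = 0 →
    ∫ x, f x ^ 2 * ρ x ≤ (1 / lam) * ∫ x, ‖gradient f x‖ ^ 2 * ρ x


-- bounds on the exponential weight
lemma expG_lb (h : EuclideanSpace ℝ (Fin d) → ℝ) (C : ℝ) (hhb : ∀ x, |h x| ≤ C)
    (S t : ℝ) (ht : 0 ≤ t) (x : EuclideanSpace ℝ (Fin d)) :
    Real.exp (-(C * |S| + t / 2 * C ^ 2)) ≤ Real.exp (h x * S - t / 2 * h x ^ 2) := by
  apply Real.exp_le_exp.2
  have h1 : |h x * S| ≤ C * |S| := by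
    rw [abs_mul]; exact mul_le_mul_of_nonneg_right (hhb x) (abs_nonneg _)
  have h2 : h x ^ 2 ≤ C ^ 2 := by
    have := hhb x
    calc h x ^ 2 = |h x| ^ 2 := (sq_abs _).symm
    _ ≤ C ^ 2 := pow_le_pow_left₀ (abs_nonneg _) this 2
  have h3 : t / 2 * h x ^ 2 ≤ t / 2 * C ^ 2 :=
    mul_le_mul_of_nonneg_left h2 (by linarith)
  have h4 : -(C * |S|) ≤ h x * S := neg_le_of_abs_le h1
  linarith

lemma expG_ub (h : EuclideanSpace ℝ (Fin d) → ℝ) (C : ℝ) (hhb : ∀ x, |h x| ≤ C)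
    (S t : ℝ) (ht : 0 ≤ t) (x : EuclideanSpace ℝ (Fin d)) :
    Real.exp (h x * S - t / 2 * h x ^ 2) ≤ Real.exp (C * |S|) := by
  apply Real.exp_le_exp.2
  have h1 : |h x * S| ≤ C * |S| := by
    rw [abs_mul]; exact mul_le_mul_of_nonneg_right (hhb x) (abs_nonneg _)
  have h4 : h x * S ≤ C * |S| := le_of_abs_le h1
  have h5 : 0 ≤ t / 2 * h x ^ 2 := mul_nonneg (by linarith) (sq_nonneg _)
  linarith

lemma weight_integrable (h ρ₀ : EuclideanSpace ℝ (Fin d) → ℝ)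
    (hhm : Measurable h) (C : ℝ) (hhb : ∀ x, |h x| ≤ C)
    (hρ₀m : Measurable ρ₀) (hρ₀nn : ∀ x, 0 ≤ ρ₀ x) (hρ₀int : Integrable ρ₀)
    (S t : ℝ) (ht : 0 ≤ t) :
    Integrable (fun y => ρ₀ y * Real.exp (h y * S - t / 2 * h y ^ 2)) := by
  apply Integrable.mono' (hρ₀int.const_mul (Real.exp (C * |S|)))
  · exact (hρ₀m.mul ((hhm.mul measurable_const).sub
      ((measurable_const.mul (hhm.pow measurable_const)))).exp).aestronglyMeasurable
  · filter_upwards with y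
    rw [Real.norm_eq_abs, abs_of_nonneg (mul_nonneg (hρ₀nn y) (Real.exp_pos _).le)]
    rw [mul_comm (Real.exp _) (ρ₀ y)]
    exact mul_le_mul_of_nonneg_left (expG_ub h C hhb S t ht y) (hρ₀nn y)

lemma weight_pos (h ρ₀ : EuclideanSpace ℝ (Fin d) → ℝ)
    (hhm : Measurable h) (C : ℝ) (hhb : ∀ x, |h x| ≤ C)
    (hρ₀m : Measurable ρ₀) (hρ₀nn : ∀ x, 0 ≤ ρ₀ x) (hρ₀int : Integrable ρ₀)
    (hρ₀1 : ∫ x, ρ₀ x = 1) (S t : ℝ) (ht : 0 ≤ t) :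
    0 < ∫ y, ρ₀ y * Real.exp (h y * S - t / 2 * h y ^ 2) := by
  have key : Real.exp (-(C * |S| + t / 2 * C ^ 2))
      ≤ ∫ y, ρ₀ y * Real.exp (h y * S - t / 2 * h y ^ 2) := by
    have : Real.exp (-(C * |S| + t / 2 * C ^ 2))
        = ∫ y, ρ₀ y * Real.exp (-(C * |S| + t / 2 * C ^ 2)) := by
      rw [integral_mul_const, hρ₀1, one_mul]
    rw [this]
    apply integral_mono (hρ₀int.mul_const _)
      (weight_integrable h ρ₀ hhm C hhb hρ₀m hρ₀nn hρ₀int S t ht)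
    intro y
    exact mul_le_mul_of_nonneg_left (expG_lb h C hhb S t ht y) (hρ₀nn y)
  exact lt_of_lt_of_le (Real.exp_pos _) key

lemma bayesH_closed (h ρ₀ : EuclideanSpace ℝ (Fin d) → ℝ) (ΔZ Δt : ℕ → ℝ)
    (hΔt : ∀ n, 0 < Δt n)
    (hhm : Measurable h) (C : ℝ) (hhb : ∀ x, |h x| ≤ C)
    (hρ₀m : Measurable ρ₀) (hρ₀nn : ∀ x, 0 ≤ ρ₀ x)
    (hρ₀int : Integrable ρ₀) (hρ₀1 : ∫ x, ρ₀ x = 1) (n : ℕ) :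
    bayesH h ρ₀ ΔZ Δt n = fun x =>
      ρ₀ x * Real.exp (h x * (∑ k ∈ Finset.range n, ΔZ k)
        - (∑ k ∈ Finset.range n, Δt k) / 2 * h x ^ 2) /
      ∫ y, ρ₀ y * Real.exp (h y * (∑ k ∈ Finset.range n, ΔZ k)
        - (∑ k ∈ Finset.range n, Δt k) / 2 * h y ^ 2) := by
  have ht0 : ∀ m : ℕ, (0:ℝ) ≤ ∑ k ∈ Finset.range m, Δt k := fun m =>
    Finset.sum_nonneg fun k _ => (hΔt k).le
  induction n with
  | zero =>
    funext x
    simp [bayesH, hρ₀1]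
  | succ n ih =>
    have hZpos := weight_pos h ρ₀ hhm C hhb hρ₀m hρ₀nn hρ₀int hρ₀1
      (∑ k ∈ Finset.range n, ΔZ k) (∑ k ∈ Finset.range n, Δt k) (ht0 n)
    have hZpos' := weight_pos h ρ₀ hhm C hhb hρ₀m hρ₀nn hρ₀int hρ₀1
      (∑ k ∈ Finset.range (n+1), ΔZ k) (∑ k ∈ Finset.range (n+1), Δt k) (ht0 (n+1))
    set Zn := ∫ y, ρ₀ y * Real.exp (h y * (∑ k ∈ Finset.range n, ΔZ k)
        - (∑ k ∈ Finset.range n, Δt k) / 2 * h y ^ 2) with hZn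
    have key : ∀ x, bayesH h ρ₀ ΔZ Δt n x * Real.exp (h x * ΔZ n - Δt n / 2 * h x ^ 2)
        = ρ₀ x * Real.exp (h x * (∑ k ∈ Finset.range (n+1), ΔZ k)
          - (∑ k ∈ Finset.range (n+1), Δt k) / 2 * h x ^ 2) / Zn := by
      intro x
      rw [ih]
      have hexp : Real.exp (h x * (∑ k ∈ Finset.range n, ΔZ k)
          - (∑ k ∈ Finset.range n, Δt k) / 2 * h x ^ 2) * Real.exp (h x * ΔZ n - Δt n / 2 * h x ^ 2)
          = Real.exp (h x * (∑ k ∈ Finset.range (n+1), ΔZ k)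
          - (∑ k ∈ Finset.range (n+1), Δt k) / 2 * h x ^ 2) := by
        rw [← Real.exp_add]
        congr 1
        rw [Finset.sum_range_succ, Finset.sum_range_succ]
        ring
      rw [div_mul_eq_mul_div, mul_assoc, hexp]
    funext x
    show bayesH h ρ₀ ΔZ Δt n x * Real.exp (h x * ΔZ n - Δt n / 2 * h x ^ 2) /
        (∫ y, bayesH h ρ₀ ΔZ Δt n y * Real.exp (h y * ΔZ n - Δt n / 2 * h y ^ 2)) = _
    have hint : (∫ y, bayesH h ρ₀ ΔZ Δt n y * Real.exp (h y * ΔZ n - Δt n / 2 * h y ^ 2))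
        = (∫ y, ρ₀ y * Real.exp (h y * (∑ k ∈ Finset.range (n+1), ΔZ k)
          - (∑ k ∈ Finset.range (n+1), Δt k) / 2 * h y ^ 2)) / Zn := by
      rw [show (fun y => bayesH h ρ₀ ΔZ Δt n y * Real.exp (h y * ΔZ n - Δt n / 2 * h y ^ 2))
          = fun y => ρ₀ y * Real.exp (h y * (∑ k ∈ Finset.range (n+1), ΔZ k)
          - (∑ k ∈ Finset.range (n+1), Δt k) / 2 * h y ^ 2) / Zn from funext key]
      exact integral_div Zn _
    rw [key x, hint]
    rw [div_div_div_cancel_right₀ (ne_of_gt hZpos)]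

lemma perturbed_PI {d : ℕ} (ρ₀ : EuclideanSpace ℝ (Fin d) → ℝ)
    (hρ₀m : Measurable ρ₀) (hρ₀nn : ∀ x, 0 ≤ ρ₀ x)
    (hρ₀int : Integrable ρ₀) (hρ₀1 : ∫ x, ρ₀ x = 1)
    (lam₀ : ℝ) (hlam₀ : 0 < lam₀) (hPI₀ : PoincareIneq ρ₀ lam₀)
    (E : EuclideanSpace ℝ (Fin d) → ℝ) (mE : Measurable E)
    (a b : ℝ) (ha : 0 < a) (hEa : ∀ x, a ≤ E x) (hEb : ∀ x, E x ≤ b)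
    (hEint : Integrable (fun y => ρ₀ y * E y))
    (hZpos : 0 < ∫ y, ρ₀ y * E y) :
    PoincareIneq (fun x => ρ₀ x * E x / ∫ y, ρ₀ y * E y) (lam₀ * (a / b)) := by
  intro f hf hif2 higrad hmean
  simp only [] at hif2 higrad hmean ⊢
  set Z := ∫ y, ρ₀ y * E y with hZdef
  have hb0 : 0 < b := lt_of_lt_of_le ha (le_trans (hEa 0) (hEb 0))
  set ρ : EuclideanSpace ℝ (Fin d) → ℝ := fun x => ρ₀ x * E x / Z with hρdef
  have hρx : ∀ x, ρ x = ρ₀ x * E x / Z := fun x => rfl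
  have hif2' : Integrable (fun x => f x ^ 2 * ρ x) := hif2
  have higrad' : Integrable (fun x => ‖gradient f x‖ ^ 2 * ρ x) := higrad
  have hmean' : ∫ x, f x * ρ x = 0 := hmean
  have hρnn : ∀ x, 0 ≤ ρ x := fun x =>
    div_nonneg (mul_nonneg (hρ₀nn x) (le_trans ha.le (hEa x))) hZpos.le
  have hρm : Measurable ρ := (hρ₀m.mul mE).div_const Z
  have hρint : Integrable ρ := hEint.div_const Z
  have hρ1 : ∫ x, ρ x = 1 := by
    simp only [hρdef]
    rw [integral_div, div_self hZpos.ne']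
  have hup : ∀ x, ρ x ≤ (b / Z) * ρ₀ x := by
    intro x
    calc ρ x = ρ₀ x * E x / Z := rfl
      _ ≤ ρ₀ x * b / Z :=
        div_le_div_of_nonneg_right (mul_le_mul_of_nonneg_left (hEb x) (hρ₀nn x)) hZpos.le
      _ = (b / Z) * ρ₀ x := by ring
  have hinv : ∀ x, ρ₀ x ≤ (Z / a) * ρ x := by
    intro x
    have h1 : (a / Z) * ρ₀ x ≤ ρ x := by
      calc (a / Z) * ρ₀ x = ρ₀ x * a / Z := by ring
        _ ≤ ρ₀ x * E x / Z :=
          div_le_div_of_nonneg_right (mul_le_mul_of_nonneg_left (hEa x) (hρ₀nn x)) hZpos.le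
        _ = ρ x := rfl
    calc ρ₀ x = (Z / a) * ((a / Z) * ρ₀ x) := by
          field_simp
      _ ≤ (Z / a) * ρ x :=
          mul_le_mul_of_nonneg_left h1 (div_nonneg hZpos.le ha.le)
  -- continuity / measurability
  have hfc : Continuous f := hf.continuous
  have hgradc : Continuous (gradient f) := by
    have h1 : Continuous (fderiv ℝ f) := hf.continuous_fderiv one_ne_zero
    exact (InnerProductSpace.toDual ℝ (EuclideanSpace ℝ (Fin d))).symm.continuous.comp h1
  -- integrability transfers
  have i2 : Integrable (fun x => f x ^ 2 * ρ₀ x) := by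
    apply Integrable.mono' (hif2'.const_mul (Z / a))
    · exact ((hfc.measurable.pow_const 2).mul hρ₀m).aestronglyMeasurable
    · filter_upwards with x
      rw [Real.norm_eq_abs, abs_of_nonneg (mul_nonneg (sq_nonneg _) (hρ₀nn x))]
      calc f x ^ 2 * ρ₀ x ≤ f x ^ 2 * ((Z / a) * ρ x) :=
            mul_le_mul_of_nonneg_left (hinv x) (sq_nonneg _)
        _ = Z / a * (f x ^ 2 * ρ x) := by ring
  have igrad0 : Integrable (fun x => ‖gradient f x‖ ^ 2 * ρ₀ x) := by
    apply Integrable.mono' (higrad'.const_mul (Z / a))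
    · exact (((hgradc.norm.pow 2).measurable).mul hρ₀m).aestronglyMeasurable
    · filter_upwards with x
      rw [Real.norm_eq_abs, abs_of_nonneg (mul_nonneg (sq_nonneg _) (hρ₀nn x))]
      calc ‖gradient f x‖ ^ 2 * ρ₀ x ≤ ‖gradient f x‖ ^ 2 * ((Z / a) * ρ x) :=
            mul_le_mul_of_nonneg_left (hinv x) (sq_nonneg _)
        _ = Z / a * (‖gradient f x‖ ^ 2 * ρ x) := by ring
  have habs : ∀ (g : EuclideanSpace ℝ (Fin d) → ℝ), (∀ x, 0 ≤ g x) →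
      Integrable (fun x => f x ^ 2 * g x) → Integrable g →
      AEStronglyMeasurable (fun x => f x * g x) volume →
      Integrable (fun x => f x * g x) := by
    intro g hgnn hig2 hig hmeas
    apply Integrable.mono' ((hig2.add hig).div_const 2) hmeas
    filter_upwards with x
    rw [Real.norm_eq_abs, abs_mul, abs_of_nonneg (hgnn x)]
    have h5 : |f x| ≤ (f x ^ 2 + 1) / 2 := by
      nlinarith [sq_nonneg (|f x| - 1), sq_abs (f x)]
    calc |f x| * g x ≤ (f x ^ 2 + 1) / 2 * g x :=
          mul_le_mul_of_nonneg_right h5 (hgnn x)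
      _ = (f x ^ 2 * g x + g x) / 2 := by ring
  have i3 : Integrable (fun x => f x * ρ₀ x) :=
    habs ρ₀ hρ₀nn i2 hρ₀int (hfc.measurable.mul hρ₀m).aestronglyMeasurable
  have i4 : Integrable (fun x => f x * ρ x) :=
    habs ρ hρnn hif2' hρint (hfc.measurable.mul hρm).aestronglyMeasurable
  set m := ∫ x, f x * ρ₀ x with hm
  have i5 : Integrable (fun x => (f x - m) ^ 2 * ρ₀ x) := by
    have hrw : (fun x => (f x - m) ^ 2 * ρ₀ x)
        = fun x => (f x ^ 2 * ρ₀ x - (2 * m) * (f x * ρ₀ x)) + m ^ 2 * ρ₀ x := by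
      funext x; ring
    rw [hrw]
    exact (i2.sub (i3.const_mul (2 * m))).add (hρ₀int.const_mul (m ^ 2))
  have i6 : Integrable (fun x => (f x - m) ^ 2 * ρ x) := by
    have hrw : (fun x => (f x - m) ^ 2 * ρ x)
        = fun x => (f x ^ 2 * ρ x - (2 * m) * (f x * ρ x)) + m ^ 2 * ρ x := by
      funext x; ring
    rw [hrw]
    exact (hif2'.sub (i4.const_mul (2 * m))).add (hρint.const_mul (m ^ 2))
  have hmean0 : ∫ x, (f x - m) * ρ₀ x = 0 := by
    have hrw : (fun x => (f x - m) * ρ₀ x) = fun x => f x * ρ₀ x - m * ρ₀ x := by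
      funext x; ring
    have e1 : ∫ x, (f x * ρ₀ x - m * ρ₀ x) = (∫ x, f x * ρ₀ x) - ∫ x, m * ρ₀ x :=
      integral_sub i3 (hρ₀int.const_mul m)
    have e2 : ∫ x, m * ρ₀ x = m * ∫ x, ρ₀ x := integral_const_mul m ρ₀
    rw [hrw, e1, e2, hρ₀1]
    simp [hm]
  have hgradg : gradient (fun x => f x - m) = gradient f := by
    funext x
    show (InnerProductSpace.toDual ℝ _).symm (fderiv ℝ (fun y => f y - m) x)
      = (InnerProductSpace.toDual ℝ _).symm (fderiv ℝ f x)
    rw [fderiv_sub_const]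
  have hPIg := hPI₀ (fun x => f x - m) (hf.sub contDiff_const) i5
    (by simpa only [hgradg] using igrad0) hmean0
  simp only [hgradg] at hPIg
  -- main chain
  have step1 : ∫ x, f x ^ 2 * ρ x ≤ ∫ x, (f x - m) ^ 2 * ρ x := by
    have hrw : (fun x => (f x - m) ^ 2 * ρ x)
        = fun x => (f x ^ 2 * ρ x - (2 * m) * (f x * ρ x)) + m ^ 2 * ρ x := by
      funext x; ring
    have e1 : ∫ x, ((f x ^ 2 * ρ x - (2 * m) * (f x * ρ x)) + m ^ 2 * ρ x)
        = (∫ x, (f x ^ 2 * ρ x - (2 * m) * (f x * ρ x))) + ∫ x, m ^ 2 * ρ x :=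
      integral_add (hif2'.sub (i4.const_mul (2 * m))) (hρint.const_mul (m ^ 2))
    have e2 : ∫ x, (f x ^ 2 * ρ x - (2 * m) * (f x * ρ x))
        = (∫ x, f x ^ 2 * ρ x) - ∫ x, (2 * m) * (f x * ρ x) :=
      integral_sub hif2' (i4.const_mul (2 * m))
    have e3 : ∫ x, (2 * m) * (f x * ρ x) = (2 * m) * ∫ x, f x * ρ x :=
      integral_const_mul _ _
    have e4 : ∫ x, m ^ 2 * ρ x = m ^ 2 * ∫ x, ρ x := integral_const_mul _ _
    have hexp : ∫ x, (f x - m) ^ 2 * ρ x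
        = (∫ x, f x ^ 2 * ρ x) - (2 * m) * (∫ x, f x * ρ x) + m ^ 2 * ∫ x, ρ x := by
      rw [hrw, e1, e2, e3, e4]
    rw [hexp, hmean', hρ1]
    nlinarith [sq_nonneg m]
  have step2 : ∫ x, (f x - m) ^ 2 * ρ x ≤ (b / Z) * ∫ x, (f x - m) ^ 2 * ρ₀ x := by
    rw [← integral_const_mul]
    apply integral_mono i6 (i5.const_mul (b / Z))
    intro x
    calc (f x - m) ^ 2 * ρ x ≤ (f x - m) ^ 2 * ((b / Z) * ρ₀ x) :=
          mul_le_mul_of_nonneg_left (hup x) (sq_nonneg _)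
      _ = b / Z * ((f x - m) ^ 2 * ρ₀ x) := by ring
  have step4 : ∫ x, ‖gradient f x‖ ^ 2 * ρ₀ x ≤ (Z / a) * ∫ x, ‖gradient f x‖ ^ 2 * ρ x := by
    rw [← integral_const_mul]
    apply integral_mono igrad0 (higrad'.const_mul (Z / a))
    intro x
    calc ‖gradient f x‖ ^ 2 * ρ₀ x ≤ ‖gradient f x‖ ^ 2 * ((Z / a) * ρ x) :=
          mul_le_mul_of_nonneg_left (hinv x) (sq_nonneg _)
      _ = Z / a * (‖gradient f x‖ ^ 2 * ρ x) := by ring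
  have hbZ : (0:ℝ) ≤ b / Z := (div_pos hb0 hZpos).le
  calc ∫ x, f x ^ 2 * ρ x ≤ ∫ x, (f x - m) ^ 2 * ρ x := step1
    _ ≤ (b / Z) * ∫ x, (f x - m) ^ 2 * ρ₀ x := step2
    _ ≤ (b / Z) * ((1 / lam₀) * ∫ x, ‖gradient f x‖ ^ 2 * ρ₀ x) :=
        mul_le_mul_of_nonneg_left hPIg hbZ
    _ ≤ (b / Z) * ((1 / lam₀) * ((Z / a) * ∫ x, ‖gradient f x‖ ^ 2 * ρ x)) := by
        apply mul_le_mul_of_nonneg_left _ hbZ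
        apply mul_le_mul_of_nonneg_left step4 (by positivity)
    _ = 1 / (lam₀ * (a / b)) * ∫ x, ‖gradient f x‖ ^ 2 * ρ x := by
        have h1 : Z ≠ 0 := hZpos.ne'
        have h2 : a ≠ 0 := ha.ne'
        have h3 : b ≠ 0 := hb0.ne'
        have h4 : lam₀ ≠ 0 := hlam₀.ne'
        field_simp

/-- **Uniform Poincaré inequality along the Bayes recursion.**  If `ρ_0` satisfies
`PI(λ_0)`, `|Z_n - Z_0| = |∑_{k<n} ΔZ_k| ≤ M` and `t_n = ∑_{k<n} Δt_k ≤ T` for all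
`n ≤ N`, then every `ρ_n`, `n ≤ N`, satisfies `PI(λ̄)` with the uniform constant
`λ̄ = λ_0 exp(-(2 M ‖h‖_∞ + T ‖h‖_∞²))`. -/
theorem bayes_uniform_poincare
    {d : ℕ} (h ρ₀ : EuclideanSpace ℝ (Fin d) → ℝ) (ΔZ Δt : ℕ → ℝ) (N : ℕ)
    (hΔt : ∀ n, 0 < Δt n)
    (hhm : Measurable h) (C : ℝ) (hhb : ∀ x, |h x| ≤ C)
    (hρ₀m : Measurable ρ₀) (hρ₀nn : ∀ x, 0 ≤ ρ₀ x)
    (hρ₀int : Integrable ρ₀) (hρ₀1 : ∫ x, ρ₀ x = 1)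
    (lam₀ : ℝ) (hlam₀ : 0 < lam₀) (hPI₀ : PoincareIneq ρ₀ lam₀)
    (M T : ℝ) (hM : 0 < M) (hT : 0 < T)
    (hZb : ∀ n ≤ N, |∑ k ∈ Finset.range n, ΔZ k| ≤ M)
    (htb : ∀ n ≤ N, ∑ k ∈ Finset.range n, Δt k ≤ T) :
    ∀ n ≤ N, PoincareIneq (bayesH h ρ₀ ΔZ Δt n)
      (lam₀ * Real.exp (-(2 * M * C + T * C ^ 2))) := by

  intro n hn
  have hC0 : (0:ℝ) ≤ C := le_trans (abs_nonneg _) (hhb 0)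
  have ht0 : (0:ℝ) ≤ ∑ k ∈ Finset.range n, Δt k :=
    Finset.sum_nonneg fun k _ => (hΔt k).le
  have hform := bayesH_closed h ρ₀ ΔZ Δt hΔt hhm C hhb hρ₀m hρ₀nn hρ₀int hρ₀1 n
  rw [hform]
  set S := ∑ k ∈ Finset.range n, ΔZ k with hSdef
  set t := ∑ k ∈ Finset.range n, Δt k with htdef
  have hSM : |S| ≤ M := hZb n hn
  have htT : t ≤ T := htb n hn
  have mE : Measurable fun x => Real.exp (h x * S - t / 2 * h x ^ 2) :=
    ((hhm.mul measurable_const).sub (measurable_const.mul (hhm.pow measurable_const))).exp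
  have h1 : C * |S| ≤ M * C :=
    le_trans (mul_le_mul_of_nonneg_left hSM hC0) (le_of_eq (mul_comm C M))
  have hEa : ∀ x, Real.exp (-(M * C + T / 2 * C ^ 2))
      ≤ Real.exp (h x * S - t / 2 * h x ^ 2) := by
    intro x
    refine le_trans (Real.exp_le_exp.2 ?_) (expG_lb h C hhb S t ht0 x)
    have h2 : t / 2 * C ^ 2 ≤ T / 2 * C ^ 2 :=
      mul_le_mul_of_nonneg_right (by linarith) (sq_nonneg _)
    linarith
  have hEb : ∀ x, Real.exp (h x * S - t / 2 * h x ^ 2)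
      ≤ Real.exp (M * C + T / 2 * C ^ 2) := by
    intro x
    refine le_trans (expG_ub h C hhb S t ht0 x) (Real.exp_le_exp.2 ?_)
    have h2 : 0 ≤ T / 2 * C ^ 2 := mul_nonneg (by linarith) (sq_nonneg _)
    linarith
  have hEint := weight_integrable h ρ₀ hhm C hhb hρ₀m hρ₀nn hρ₀int S t ht0
  have hZpos := weight_pos h ρ₀ hhm C hhb hρ₀m hρ₀nn hρ₀int hρ₀1 S t ht0
  have key := perturbed_PI ρ₀ hρ₀m hρ₀nn hρ₀int hρ₀1 lam₀ hlam₀ hPI₀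
    (fun x => Real.exp (h x * S - t / 2 * h x ^ 2)) mE
    (Real.exp (-(M * C + T / 2 * C ^ 2))) (Real.exp (M * C + T / 2 * C ^ 2))
    (Real.exp_pos _) hEa hEb hEint hZpos
  have hconst : lam₀ * (Real.exp (-(M * C + T / 2 * C ^ 2)) / Real.exp (M * C + T / 2 * C ^ 2))
      = lam₀ * Real.exp (-(2 * M * C + T * C ^ 2)) := by
    rw [← Real.exp_sub]
    congr 1
    congr 1
    ring
  rw [← hconst]
  exact key
end

section
/- (Differentiated Poisson identity.) Let ρ(x) = e^{−G(x)} > 0 on ℝ^d with G twice continuously differentiable, let g be continuously differentiable, let c ∈ ℝ, and let φ be three times continuously differentiable satisfying the pointwise equation −∇·(ρ ∇φ)(x) = (g(x) − c) ρ(x) for all x ∈ ℝ^d. Define the vector field G⃗ = D²(log ρ) ∇φ + ∇g, i.e., G⃗_k = Σ_j (∂² log ρ / ∂x_k ∂x_j) (∂φ/∂x_j) + ∂g/∂x_k. Then for each k ∈ {1,…,d} the pointwise identity −∇·( ρ ∇(∂φ/∂x_k) )(x) = G⃗_k(x) ρ(x) holds for all x ∈ ℝ^d. -/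
open MeasureTheory Real

/-- Divergence `∇·V = ∑_j ∂V_j/∂x_j` of a vector field on `ℝ^d`. -/
noncomputable def diverg {d : ℕ}
    (V : EuclideanSpace ℝ (Fin d) → EuclideanSpace ℝ (Fin d))
    (x : EuclideanSpace ℝ (Fin d)) : ℝ :=
  ∑ j, fderiv ℝ (fun y => V y j) x (EuclideanSpace.single j 1)

/-! ### Auxiliary lemmas -/

/-- Expansion of a continuous linear functional on `ℝ^d` in coordinates. -/
lemma clm_expand {d : ℕ} (L : EuclideanSpace ℝ (Fin d) →L[ℝ] ℝ) (v : EuclideanSpace ℝ (Fin d)) :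
    L v = ∑ j, v j * L (EuclideanSpace.single j 1) := by
  conv_lhs => rw [← OrthonormalBasis.sum_repr (EuclideanSpace.basisFun (Fin d) ℝ) v]
  rw [map_sum]
  refine Finset.sum_congr rfl fun j _ => ?_
  rw [_root_.map_smul]
  simp [EuclideanSpace.basisFun_repr, EuclideanSpace.basisFun_apply]

/-- Coordinates of the gradient are the partial derivatives. -/
lemma grad_coord {d : ℕ} (f : EuclideanSpace ℝ (Fin d) → ℝ) (x : EuclideanSpace ℝ (Fin d))
    (j : Fin d) :
    gradient f x j = fderiv ℝ f x (EuclideanSpace.single j 1) := by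
  have h : fderiv ℝ f x (EuclideanSpace.single j 1)
      = @inner ℝ _ _ (gradient f x) (EuclideanSpace.single j 1) := by
    rw [gradient, ← InnerProductSpace.toDual_apply_apply, LinearIsometryEquiv.apply_symm_apply]
  rw [h, EuclideanSpace.inner_single_right]
  simp

/-- Schwarz symmetry of second derivatives for a `C²` function, in terms of iterated
directional derivatives. -/
lemma symm_snd {d : ℕ} (f : EuclideanSpace ℝ (Fin d) → ℝ) (x : EuclideanSpace ℝ (Fin d))
    (hf : ContDiff ℝ 2 f) (v w : EuclideanSpace ℝ (Fin d)) :
    fderiv ℝ (fun y => fderiv ℝ f y v) x w = fderiv ℝ (fun y => fderiv ℝ f y w) x v := by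
  have hd : DifferentiableAt ℝ (fderiv ℝ f) x :=
    ((hf.fderiv_right (m := 1) (by norm_num)).differentiable (by norm_num)).differentiableAt
  have key : ∀ u : EuclideanSpace ℝ (Fin d), fderiv ℝ (fun y => fderiv ℝ f y u) x
      = (fderiv ℝ (fderiv ℝ f) x).flip u := by
    intro u
    rw [fderiv_clm_apply hd (differentiableAt_const u)]
    simp
  rw [key v, key w]
  exact (hf.contDiffAt.isSymmSndFDerivAt (by norm_num)) w v

lemma fderiv_coord {d : ℕ} (F : EuclideanSpace ℝ (Fin d) → EuclideanSpace ℝ (Fin d))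
    (x v : EuclideanSpace ℝ (Fin d)) (hF : DifferentiableAt ℝ F x) (k : Fin d) :
    (fderiv ℝ F x v) k = fderiv ℝ (fun y => F y k) x v := by
  have h : (fun y => F y k) = fun y => EuclideanSpace.proj (𝕜 := ℝ) k (F y) := rfl
  rw [h, fderiv_comp' x (ContinuousLinearMap.differentiableAt _) hF, ContinuousLinearMap.fderiv]
  simp

lemma grad_contDiff {d : ℕ} (f : EuclideanSpace ℝ (Fin d) → ℝ) {n m : ℕ∞}
    (hf : ContDiff ℝ n f) (hmn : (m : WithTop ℕ∞) + 1 ≤ (n : WithTop ℕ∞)) :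
    ContDiff ℝ m (fun y => gradient f y) := by
  have h : (fun y => gradient f y)
      = fun y => (InnerProductSpace.toDual ℝ (EuclideanSpace ℝ (Fin d))).symm (fderiv ℝ f y) :=
    rfl
  rw [h]
  exact ((InnerProductSpace.toDual ℝ (EuclideanSpace ℝ (Fin d))).symm.contDiff).comp
    (hf.fderiv_right hmn)

/-- Partial derivative in the `j`-th coordinate direction. -/
noncomputable def pd {d : ℕ} (f : EuclideanSpace ℝ (Fin d) → ℝ) (j : Fin d) :
    EuclideanSpace ℝ (Fin d) → ℝ :=
  fun y => fderiv ℝ f y (EuclideanSpace.single j 1)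

lemma pd_contDiff {d : ℕ} {f : EuclideanSpace ℝ (Fin d) → ℝ} {n m : ℕ∞}
    (hf : ContDiff ℝ n f) (hmn : (m : WithTop ℕ∞) + 1 ≤ (n : WithTop ℕ∞)) (j : Fin d) :
    ContDiff ℝ m (pd f j) :=
  (hf.fderiv_right hmn).clm_apply contDiff_const

lemma pd_mul {d : ℕ} (a b : EuclideanSpace ℝ (Fin d) → ℝ) (j : Fin d)
    (x : EuclideanSpace ℝ (Fin d)) (ha : DifferentiableAt ℝ a x) (hb : DifferentiableAt ℝ b x) :
    pd (fun y => a y * b y) j x = a x * pd b j x + b x * pd a j x := by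
  unfold pd
  rw [fderiv_fun_mul ha hb]
  simp

lemma pd_add {d : ℕ} (a b : EuclideanSpace ℝ (Fin d) → ℝ) (j : Fin d)
    (x : EuclideanSpace ℝ (Fin d)) (ha : DifferentiableAt ℝ a x) (hb : DifferentiableAt ℝ b x) :
    pd (fun y => a y + b y) j x = pd a j x + pd b j x := by
  unfold pd
  rw [fderiv_fun_add ha hb]
  simp

lemma pd_neg {d : ℕ} (a : EuclideanSpace ℝ (Fin d) → ℝ) (j : Fin d)
    (x : EuclideanSpace ℝ (Fin d)) :
    pd (fun y => -(a y)) j x = -(pd a j x) := by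
  unfold pd
  rw [fderiv_fun_neg]
  simp

lemma pd_sub_const {d : ℕ} (a : EuclideanSpace ℝ (Fin d) → ℝ) (c : ℝ) (j : Fin d)
    (x : EuclideanSpace ℝ (Fin d)) :
    pd (fun y => a y - c) j x = pd a j x := by
  unfold pd
  rw [fderiv_sub_const]

lemma pd_sum {d : ℕ} (A : Fin d → EuclideanSpace ℝ (Fin d) → ℝ) (k : Fin d)
    (x : EuclideanSpace ℝ (Fin d)) (hA : ∀ j, DifferentiableAt ℝ (A j) x) :
    pd (fun y => ∑ j, A j y) k x = ∑ j, pd (A j) k x := by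
  unfold pd
  rw [fderiv_fun_sum (fun j _ => hA j)]
  simp

lemma pd_swap {d : ℕ} (f : EuclideanSpace ℝ (Fin d) → ℝ) (hf : ContDiff ℝ 2 f)
    (j k : Fin d) (x : EuclideanSpace ℝ (Fin d)) :
    pd (pd f j) k x = pd (pd f k) j x := by
  unfold pd
  exact symm_snd f x hf _ _

lemma diverg_coord {d : ℕ} (ρ f : EuclideanSpace ℝ (Fin d) → ℝ) (x : EuclideanSpace ℝ (Fin d)) :
    diverg (fun y => ρ y • gradient f y) x = ∑ j, pd (fun y => ρ y * pd f j y) j x := by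
  unfold diverg pd
  refine Finset.sum_congr rfl fun j _ => ?_
  have h : (fun y => (ρ y • gradient f y : EuclideanSpace ℝ (Fin d)) j)
      = fun y => ρ y * fderiv ℝ f y (EuclideanSpace.single j 1) := by
    funext y; simp [grad_coord]
  simp only []
  rw [h]

/-- The main computation, in coordinates. -/
lemma main_calc {d : ℕ} (G g φ ρ : EuclideanSpace ℝ (Fin d) → ℝ) (c : ℝ)
    (hG : ContDiff ℝ 2 G) (hg : ContDiff ℝ 1 g) (hφ : ContDiff ℝ 3 φ)
    (hρ : ρ = fun x => Real.exp (-G x))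
    (hpde' : ∀ x, ∑ j, pd (fun y => ρ y * pd φ j y) j x = -((g x - c) * ρ x))
    (k : Fin d) (x : EuclideanSpace ℝ (Fin d)) :
    -∑ j, pd (fun y => ρ y * pd (pd φ k) j y) j x
      = (∑ j, pd φ j x * pd (pd (fun z => -G z) k) j x + pd g k x) * ρ x := by
  have hρC : ContDiff ℝ 2 ρ := by rw [hρ]; exact hG.neg.exp
  have hLf : ContDiff ℝ 2 (fun z : EuclideanSpace ℝ (Fin d) => -G z) := hG.neg
  have hpdφ : ∀ j, ContDiff ℝ 2 (pd φ j) := fun j => pd_contDiff hφ (by norm_num) j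
  have hF : ∀ j, ContDiff ℝ 2 (fun y => ρ y * pd φ j y) := fun j => hρC.mul (hpdφ j)
  have hLk : ContDiff ℝ 1 (pd (fun z : EuclideanSpace ℝ (Fin d) => -G z) k) :=
    pd_contDiff hLf (by norm_num) k
  have hρd : ∀ (v : Fin d) (y : EuclideanSpace ℝ (Fin d)),
      pd ρ v y = ρ y * pd (fun z => -G z) v y := by
    intro v y
    have h1 : HasFDerivAt (fun z : EuclideanSpace ℝ (Fin d) => -G z)
        (fderiv ℝ (fun z : EuclideanSpace ℝ (Fin d) => -G z) y) y :=
      (hLf.differentiable (by norm_num) y).hasFDerivAt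
    have h2 : HasFDerivAt ρ
        (Real.exp (-G y) • fderiv ℝ (fun z : EuclideanSpace ℝ (Fin d) => -G z) y) y := by
      rw [hρ]; exact h1.exp
    unfold pd
    rw [h2.fderiv, ContinuousLinearMap.smul_apply, smul_eq_mul, hρ]
  -- differentiate the PDE in direction k
  have key : pd (fun x => ∑ j, pd (fun y => ρ y * pd φ j y) j x) k x
      = pd (fun x => -((g x - c) * ρ x)) k x := by
    have h : (fun x => ∑ j, pd (fun y => ρ y * pd φ j y) j x)
        = fun x => -((g x - c) * ρ x) := funext hpde'
    rw [h]
  have hDF1 : ∀ j, ContDiff ℝ 1 (pd (fun y => ρ y * pd φ j y) j) :=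
    fun j => pd_contDiff (hF j) (by norm_num) j
  have lhs1 : pd (fun x => ∑ j, pd (fun y => ρ y * pd φ j y) j x) k x
      = ∑ j, pd (pd (fun y => ρ y * pd φ j y) j) k x :=
    pd_sum _ k x (fun j => ((hDF1 j).differentiable (by norm_num)).differentiableAt)
  have step : ∀ j, pd (pd (fun y => ρ y * pd φ j y) j) k x
      = pd (fun y => ρ y * pd (pd φ k) j y) j x
        + (pd (fun z => -G z) k x * pd (fun y => ρ y * pd φ j y) j x
           + (ρ x * pd φ j x) * pd (pd (fun z => -G z) k) j x) := by
    intro j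
    rw [pd_swap _ (hF j)]
    have hfun : pd (fun y => ρ y * pd φ j y) k
        = fun y => ρ y * pd (pd φ k) j y + pd (fun z => -G z) k y * (ρ y * pd φ j y) := by
      funext y
      rw [pd_mul ρ (pd φ j) k y (hρC.differentiable (by norm_num) y)
        (((hpdφ j).differentiable (by norm_num)) y), hρd k y,
        pd_swap φ (hφ.of_le (by norm_num)) j k]
      ring
    rw [hfun]
    have hd1 : DifferentiableAt ℝ (fun y => ρ y * pd (pd φ k) j y) x :=
      ((hρC.differentiable (by norm_num)).mul
        ((pd_contDiff (m := 1) (hpdφ k) (by norm_num) j).differentiable (by norm_num))).differentiableAt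
    have hd2 : DifferentiableAt ℝ
        (fun y => pd (fun z => -G z) k y * (ρ y * pd φ j y)) x :=
      ((hLk.differentiable (by norm_num)).mul ((hF j).differentiable (by norm_num))).differentiableAt
    rw [pd_add _ _ j x hd1 hd2]
    congr 1
    rw [pd_mul _ _ j x (hLk.differentiable (by norm_num) x) ((hF j).differentiable (by norm_num) x)]
  have rhs1 : pd (fun x => -((g x - c) * ρ x)) k x
      = -((g x - c) * (ρ x * pd (fun z => -G z) k x) + ρ x * pd g k x) := by
    rw [pd_neg, pd_mul (fun x => g x - c) ρ k x
      ((hg.sub contDiff_const).differentiable (by norm_num) x) (hρC.differentiable (by norm_num) x),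
      pd_sub_const, hρd]
  have key2 : ∑ j, (pd (fun y => ρ y * pd (pd φ k) j y) j x
        + (pd (fun z => -G z) k x * pd (fun y => ρ y * pd φ j y) j x
           + (ρ x * pd φ j x) * pd (pd (fun z => -G z) k) j x))
      = -((g x - c) * (ρ x * pd (fun z => -G z) k x) + ρ x * pd g k x) := by
    rw [← rhs1, ← key, lhs1]
    exact Finset.sum_congr rfl fun j _ => (step j).symm
  rw [Finset.sum_add_distrib, Finset.sum_add_distrib, ← Finset.mul_sum, hpde' x] at key2
  have hC : ∑ j, (ρ x * pd φ j x) * pd (pd (fun z => -G z) k) j x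
      = (∑ j, pd φ j x * pd (pd (fun z => -G z) k) j x) * ρ x := by
    rw [Finset.sum_mul]
    exact Finset.sum_congr rfl fun j _ => by ring
  rw [hC] at key2
  have hcancel : pd (fun z => -G z) k x * -((g x - c) * ρ x)
      = -((g x - c) * (ρ x * pd (fun z => -G z) k x)) := by ring
  rw [add_mul]
  nlinarith [key2, hcancel]

/-- **Differentiated Poisson identity.**  Let `ρ = e^{-G} > 0` with `G ∈ C²`, let
`g ∈ C¹`, `c ∈ ℝ`, and let `φ ∈ C³` satisfy `-∇·(ρ∇φ) = (g - c)ρ` pointwise.  With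
`G⃗ = D²(log ρ)∇φ + ∇g`, for each coordinate `k` one has the pointwise identity
`-∇·(ρ ∇(∂φ/∂x_k)) = G⃗_k ρ`. -/
theorem poisson_differentiated_identity
    {d : ℕ} (G g φ : EuclideanSpace ℝ (Fin d) → ℝ) (c : ℝ)
    (hG : ContDiff ℝ 2 G) (hg : ContDiff ℝ 1 g) (hφ : ContDiff ℝ 3 φ)
    (ρ : EuclideanSpace ℝ (Fin d) → ℝ) (hρ : ρ = fun x => Real.exp (-G x))
    (hpde : ∀ x, -diverg (fun y => ρ y • gradient φ y) x = (g x - c) * ρ x)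
    (Gvec : EuclideanSpace ℝ (Fin d) → EuclideanSpace ℝ (Fin d))
    (hGvec : Gvec = fun x =>
      fderiv ℝ (fun y => gradient (fun z => Real.log (ρ z)) y) x (gradient φ x)
        + gradient g x) :
    ∀ k : Fin d, ∀ x,
      -diverg (fun y => ρ y • gradient (fun z => gradient φ z k) y) x =
        Gvec x k * ρ x := by
  intro k x
  have hlog : (fun z => Real.log (ρ z)) = fun z : EuclideanSpace ℝ (Fin d) => -G z := by
    funext z; rw [hρ]; exact Real.log_exp _
  have hpde' : ∀ x, ∑ j, pd (fun y => ρ y * pd φ j y) j x = -((g x - c) * ρ x) := by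
    intro y
    have := hpde y
    rw [diverg_coord ρ φ y] at this
    linarith
  -- rewrite the LHS
  have hLHS : diverg (fun y => ρ y • gradient (fun z => gradient φ z k) y) x
      = ∑ j, pd (fun y => ρ y * pd (pd φ k) j y) j x := by
    have h1 : (fun z => gradient φ z k) = pd φ k := by
      funext z; exact grad_coord φ z k
    rw [h1, diverg_coord ρ (pd φ k) x]
  -- rewrite the RHS
  have hLf : ContDiff ℝ 2 (fun z : EuclideanSpace ℝ (Fin d) => -G z) := hG.neg
  have hgraddiff : DifferentiableAt ℝ
      (fun y => gradient (fun z : EuclideanSpace ℝ (Fin d) => -G z) y) x :=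
    ((grad_contDiff _ hLf (m := 1) (by norm_num)).differentiable (by norm_num)).differentiableAt
  have hRHS : Gvec x k
      = ∑ j, pd φ j x * pd (pd (fun z : EuclideanSpace ℝ (Fin d) => -G z) k) j x
        + pd g k x := by
    rw [hGvec]
    simp only [hlog]
    rw [PiLp.add_apply]
    congr 1
    · rw [fderiv_coord _ x _ hgraddiff k]
      have h2 : (fun y => gradient (fun z : EuclideanSpace ℝ (Fin d) => -G z) y k)
          = pd (fun z : EuclideanSpace ℝ (Fin d) => -G z) k := by
        funext y; exact grad_coord _ y k
      rw [h2, clm_expand]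
      exact Finset.sum_congr rfl fun j _ => by rw [grad_coord]; rfl
    · exact grad_coord g x k
  rw [hLHS, hRHS]
  exact main_calc G g φ ρ c hG hg hφ hρ hpde' k x
end

section
/- (Integral transfer identity.) Assume h is bounded and continuously differentiable with bounded gradient. Fix n ≥ 1 and let g : ℝ^d → ℝ be measurable with g integrable with respect to both ρ_{n−1}(x)dx and ρ_n(x)dx. Let ς : ℝ^d → ℝ^d be a vector field, square-integrable with respect to ρ_{n−1}(x)dx, such that the weak-form identity ∫ ∇ψ(x) · ς(x) ρ_{n−1}(x) dx = ∫ g(x) ψ(x) ρ_{n−1}(x) dx − ( ∫ g ρ_{n−1} dx )( ∫ ψ ρ_{n−1} dx ) holds for the particular test function ψ = ρ_n/ρ_{n−1} (which is bounded and continuously differentiable with bounded gradient). Then ∫ ρ_n(x) g(x) dx = ∫ ρ_{n−1}(x) g(x) dx + ∫ ρ_n(x) ( ΔZ_n − h(x) Δt_n ) ∇h(x) · ς(x) dx. -/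
open MeasureTheory Real

lemma bayes_weight_aux {d : ℕ} (h : EuclideanSpace ℝ (Fin d) → ℝ)
    (hh : Continuous h) (C : ℝ) (hhb : ∀ x, |h x| ≤ C) (a b : ℝ)
    (ρ : EuclideanSpace ℝ (Fin d) → ℝ) (hρint : Integrable ρ)
    (hρpos : ∀ x, 0 < ρ x) :
    Integrable (fun y => ρ y * Real.exp (h y * a - b / 2 * h y ^ 2)) ∧
      0 < ∫ y, ρ y * Real.exp (h y * a - b / 2 * h y ^ 2) := by
  have hC : 0 ≤ C := le_trans (abs_nonneg _) (hhb 0)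
  set W : EuclideanSpace ℝ (Fin d) → ℝ := fun y =>
    Real.exp (h y * a - b / 2 * h y ^ 2) with hW
  have hWc : Continuous W := by fun_prop
  have hWbd : ∀ y, ‖W y‖ ≤ Real.exp (C * |a| + |b| / 2 * C ^ 2) := by
    intro y
    rw [Real.norm_eq_abs, abs_of_pos (Real.exp_pos _)]
    apply Real.exp_le_exp.mpr
    have h1 : |h y| ≤ C := hhb y
    have h2 : h y * a ≤ |h y| * |a| := le_trans (le_abs_self _) (by rw [abs_mul])
    have h3 : -(b / 2 * h y ^ 2) ≤ |b| / 2 * h y ^ 2 := by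
      have := neg_le_abs b
      nlinarith [sq_nonneg (h y)]
    have h4 : |h y| * |a| ≤ C * |a| := mul_le_mul_of_nonneg_right h1 (abs_nonneg _)
    have h5 : h y ^ 2 ≤ C ^ 2 := by nlinarith [sq_abs (h y), abs_nonneg (h y)]
    have h6 : |b| / 2 * h y ^ 2 ≤ |b| / 2 * C ^ 2 :=
      mul_le_mul_of_nonneg_left h5 (by positivity)
    linarith
  have hInt : Integrable (fun y => ρ y * W y) := by
    have := hρint.bdd_mul hWc.aestronglyMeasurable
      (Filter.Eventually.of_forall hWbd)
    simpa [mul_comm] using this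
  refine ⟨hInt, ?_⟩
  rw [integral_pos_iff_support_of_nonneg]
  · have : Function.support (fun y => ρ y * W y) = Set.univ := by
      ext y; simp [hW, (hρpos y).ne', (Real.exp_pos _).ne']
    rw [this]
    exact isOpen_univ.measure_pos volume ⟨0, trivial⟩
  · exact fun y => mul_nonneg (hρpos y).le (Real.exp_pos _).le
  · exact hInt

lemma bayes_props {d : ℕ} (h ρ₀ : EuclideanSpace ℝ (Fin d) → ℝ) (ΔZ Δt : ℕ → ℝ)
    (hh : Continuous h) (C : ℝ) (hhb : ∀ x, |h x| ≤ C)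
    (hρpos : ∀ x, 0 < ρ₀ x) (hρm : Measurable ρ₀)
    (hρint : Integrable ρ₀) (hρ1 : ∫ x, ρ₀ x = 1) :
    ∀ n, Measurable (bayesH h ρ₀ ΔZ Δt n) ∧ Integrable (bayesH h ρ₀ ΔZ Δt n) ∧
      (∀ x, 0 < bayesH h ρ₀ ΔZ Δt n x) ∧ (∫ x, bayesH h ρ₀ ΔZ Δt n x = 1) := by
  intro n
  induction n with
  | zero => exact ⟨hρm, hρint, hρpos, hρ1⟩
  | succ n ih =>
    obtain ⟨hm, hint, hpos, hone⟩ := ih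
    obtain ⟨hIntW, hZpos⟩ := bayes_weight_aux h hh C hhb (ΔZ n) (Δt n) _ hint hpos
    have heq : bayesH h ρ₀ ΔZ Δt (n + 1) = fun x =>
        bayesH h ρ₀ ΔZ Δt n x * Real.exp (h x * ΔZ n - Δt n / 2 * h x ^ 2) /
          ∫ y, bayesH h ρ₀ ΔZ Δt n y * Real.exp (h y * ΔZ n - Δt n / 2 * h y ^ 2) := by
      simp [bayesH]
    refine ⟨?_, ?_, ?_, ?_⟩
    · rw [heq]
      exact ((hm.mul (by fun_prop)).div_const _)
    · rw [heq]; exact hIntW.div_const _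
    · intro x
      rw [heq]
      exact div_pos (mul_pos (hpos x) (Real.exp_pos _)) hZpos
    · rw [heq]
      simp only [integral_div]
      exact div_self hZpos.ne'

lemma bayes_gradient_aux {d : ℕ} (h : EuclideanSpace ℝ (Fin d) → ℝ)
    (hh1 : ContDiff ℝ 1 h) (a b Z : ℝ) (x : EuclideanSpace ℝ (Fin d)) :
    HasGradientAt (fun x => Real.exp (h x * a - b / 2 * h x ^ 2) / Z)
      ((Real.exp (h x * a - b / 2 * h x ^ 2) / Z * (a - b * h x)) • gradient h x) x := by
  have hgrad : HasGradientAt h (gradient h x) x :=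
    ((hh1.differentiable one_ne_zero) x).hasGradientAt
  have hF : HasFDerivAt h ((InnerProductSpace.toDual ℝ _) (gradient h x)) x :=
    hasGradientAt_iff_hasFDerivAt.mp hgrad
  have h1 := hF.mul_const a
  have h2 : HasFDerivAt (fun y => h y ^ 2)
      ((2 * h x) • ((InnerProductSpace.toDual ℝ _) (gradient h x))) x := by
    have := hF.mul hF
    simp only [← pow_two] at this
    refine this.congr_fderiv ?_
    ext v
    simp
    ring
  have h2' := h2.const_mul (b / 2)
  have hH := h1.sub h2'
  have hE := hH.exp
  have hD := hE.const_mul Z⁻¹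
  simp only [inv_mul_eq_div] at hD
  rw [hasGradientAt_iff_hasFDerivAt]
  refine hD.congr_fderiv ?_
  ext v
  simp [_root_.map_smul, smul_smul]
  ring

/-- **Integral transfer identity.** -/
theorem bayes_integral_transfer
    {d : ℕ} (h ρ₀ : EuclideanSpace ℝ (Fin d) → ℝ) (ΔZ Δt : ℕ → ℝ)
    (hΔt : ∀ n, 0 < Δt n)
    (hh1 : ContDiff ℝ 1 h) (C : ℝ) (hhb : ∀ x, |h x| ≤ C)
    (Cg : ℝ) (hgradb : ∀ x, ‖gradient h x‖ ≤ Cg)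
    (hρpos : ∀ x, 0 < ρ₀ x) (hρm : Measurable ρ₀)
    (hρint : Integrable ρ₀) (hρ1 : ∫ x, ρ₀ x = 1)
    (n : ℕ)
    (g : EuclideanSpace ℝ (Fin d) → ℝ) (hgm : Measurable g)
    (hgInt  : Integrable (fun x => g x * bayesH h ρ₀ ΔZ Δt n x))
    (hgInt' : Integrable (fun x => g x * bayesH h ρ₀ ΔZ Δt (n + 1) x))
    (ς : EuclideanSpace ℝ (Fin d) → EuclideanSpace ℝ (Fin d))
    (hςL2 : Integrable (fun x => ‖ς x‖ ^ 2 * bayesH h ρ₀ ΔZ Δt n x))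
    (ψ : EuclideanSpace ℝ (Fin d) → ℝ)
    (hψ : ψ = fun x => bayesH h ρ₀ ΔZ Δt (n + 1) x / bayesH h ρ₀ ΔZ Δt n x)
    (hweak : ∫ x, (inner ℝ (gradient ψ x) (ς x) : ℝ) * bayesH h ρ₀ ΔZ Δt n x =
      (∫ x, g x * ψ x * bayesH h ρ₀ ΔZ Δt n x) -
        (∫ x, g x * bayesH h ρ₀ ΔZ Δt n x) * ∫ x, ψ x * bayesH h ρ₀ ΔZ Δt n x) :
    ∫ x, bayesH h ρ₀ ΔZ Δt (n + 1) x * g x =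
      (∫ x, bayesH h ρ₀ ΔZ Δt n x * g x) +
        ∫ x, bayesH h ρ₀ ΔZ Δt (n + 1) x * (ΔZ n - h x * Δt n) *
          (inner ℝ (gradient h x) (ς x) : ℝ) := by
  have hhc : Continuous h := hh1.continuous
  obtain ⟨hm, hint, hpos, hone⟩ :=
    bayes_props h ρ₀ ΔZ Δt hhc C hhb hρpos hρm hρint hρ1 n
  obtain ⟨hm', hint', hpos', hone'⟩ :=
    bayes_props h ρ₀ ΔZ Δt hhc C hhb hρpos hρm hρint hρ1 (n + 1)
  obtain ⟨hIntW, hZpos⟩ := bayes_weight_aux h hhc C hhb (ΔZ n) (Δt n) _ hint hpos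
  set ρ := bayesH h ρ₀ ΔZ Δt n with hρdef
  set ρ' := bayesH h ρ₀ ΔZ Δt (n + 1) with hρ'def
  set Z := ∫ y, ρ y * Real.exp (h y * ΔZ n - Δt n / 2 * h y ^ 2) with hZdef
  have heq : ∀ x, ρ' x = ρ x * Real.exp (h x * ΔZ n - Δt n / 2 * h x ^ 2) / Z := by
    intro x
    rw [hρ'def, hZdef, hρdef]
    simp [bayesH]
  -- ψ is exp(H)/Z
  have hψ' : ψ = fun x => Real.exp (h x * ΔZ n - Δt n / 2 * h x ^ 2) / Z := by
    funext x
    rw [hψ]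
    show ρ' x / ρ x = _
    rw [heq x]
    field_simp [(hpos x).ne']
  have hψρ : ∀ x, ψ x * ρ x = ρ' x := by
    intro x
    rw [hψ]
    show ρ' x / ρ x * ρ x = ρ' x
    field_simp [(hpos x).ne']
  -- gradient of ψ
  have hgradψ : ∀ x, gradient ψ x
      = (ψ x * (ΔZ n - Δt n * h x)) • gradient h x := by
    intro x
    rw [hψ']
    exact (bayes_gradient_aux h hh1 (ΔZ n) (Δt n) Z x).gradient
  -- pointwise identity
  have hkey : ∀ x, (inner ℝ (gradient ψ x) (ς x) : ℝ) * ρ x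
      = ρ' x * (ΔZ n - h x * Δt n) * (inner ℝ (gradient h x) (ς x) : ℝ) := by
    intro x
    rw [hgradψ x, real_inner_smul_left, ← hψρ x]
    ring
  have I1 : ∫ x, (inner ℝ (gradient ψ x) (ς x) : ℝ) * ρ x
      = ∫ x, ρ' x * (ΔZ n - h x * Δt n) * (inner ℝ (gradient h x) (ς x) : ℝ) :=
    integral_congr_ae (Filter.Eventually.of_forall hkey)
  have I2 : ∫ x, g x * ψ x * ρ x = ∫ x, g x * ρ' x :=
    integral_congr_ae (Filter.Eventually.of_forall fun x =>
      show g x * ψ x * ρ x = g x * ρ' x by rw [mul_assoc, hψρ x])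
  have I3 : ∫ x, ψ x * ρ x = 1 := by
    rw [show (fun x => ψ x * ρ x) = ρ' from funext hψρ]
    exact hone'
  rw [I1, I2, I3] at hweak
  have E1 : ∫ x, ρ' x * g x = ∫ x, g x * ρ' x :=
    integral_congr_ae (Filter.Eventually.of_forall fun x => mul_comm _ _)
  have E2 : ∫ x, ρ x * g x = ∫ x, g x * ρ x :=
    integral_congr_ae (Filter.Eventually.of_forall fun x => mul_comm _ _)
  rw [E1, E2]
  linarith
end

section
/- (Core identity for the feedback particle filter, dt-coefficient.) Let p : ℝ^d → (0,∞) be twice continuously differentiable, let h : ℝ^d → ℝ be twice continuously differentiable, let ĥ ∈ ℝ, and let K : ℝ^d → ℝ^d be twice continuously differentiable such that the divergence equation ∇·(pK)(x) = −( h(x) − ĥ ) p(x) holds for all x. Define Ω : ℝ^d → ℝ^d by Ω_l = (1/2) Σ_{k=1}^d K_k ∂K_l/∂x_k, and define u = −(1/2) K (h + ĥ) + Ω. Then the pointwise identity −∇·(p u)(x) + (1/2) Σ_{l,k=1}^d ∂²( p K_l K_k )/∂x_l ∂x_k (x) = ∇·(pK)(x) · ĥ = −( h(x) − ĥ ) ĥ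 p(x) holds for all x ∈ ℝ^d. -/
open MeasureTheory Real

/-- Second partial derivative `∂²f/∂x_l ∂x_k` of a scalar field on `ℝ^d`. -/
noncomputable def secondPartial {d : ℕ} (f : EuclideanSpace ℝ (Fin d) → ℝ)
    (x : EuclideanSpace ℝ (Fin d)) (l k : Fin d) : ℝ :=
  fderiv ℝ (fun y => fderiv ℝ f y (EuclideanSpace.single k 1)) x (EuclideanSpace.single l 1)

private lemma pd_mul_s18 {d : ℕ} {f g : EuclideanSpace ℝ (Fin d) → ℝ}
    {x v : EuclideanSpace ℝ (Fin d)}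
    (hf : DifferentiableAt ℝ f x) (hg : DifferentiableAt ℝ g x) :
    fderiv ℝ (fun y => f y * g y) x v = fderiv ℝ f x v * g x + f x * fderiv ℝ g x v := by
  rw [fderiv_fun_mul hf hg]
  simp [smul_eq_mul]
  ring

/-- **Core identity for the feedback particle filter (dt-coefficient).**  Let
`p > 0` and `h` be `C²`, `ĥ ∈ ℝ`, and let the `C²` gain `K` solve
`∇·(pK) = -(h - ĥ)p` pointwise.  With `Ω_l = (1/2) ∑_k K_k ∂K_l/∂x_k` and
`u = -(1/2)K(h + ĥ) + Ω`, the pointwise identity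
`-∇·(pu) + (1/2) ∑_{l,k} ∂²(p K_l K_k)/∂x_l∂x_k = ∇·(pK) ĥ = -(h - ĥ) ĥ p` holds. -/
theorem fpf_core_identity
    {d : ℕ} (p h : EuclideanSpace ℝ (Fin d) → ℝ)
    (hp : ContDiff ℝ 2 p) (hppos : ∀ x, 0 < p x)
    (hh : ContDiff ℝ 2 h) (hhat : ℝ)
    (K : EuclideanSpace ℝ (Fin d) → EuclideanSpace ℝ (Fin d)) (hK : ContDiff ℝ 2 K)
    (hgain : ∀ x, diverg (fun y => p y • K y) x = -(h x - hhat) * p x)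
    (Ω u : EuclideanSpace ℝ (Fin d) → EuclideanSpace ℝ (Fin d))
    (hΩ : Ω = fun x => ∑ l, ((1 / 2 : ℝ) *
      ∑ k, K x k * fderiv ℝ (fun y => K y l) x (EuclideanSpace.single k 1)) •
        EuclideanSpace.single l 1)
    (hu : u = fun x => (-(1 / 2 : ℝ) * (h x + hhat)) • K x + Ω x) :
    ∀ x,
      (-diverg (fun y => p y • u y) x +
        (1 / 2 : ℝ) * ∑ l, ∑ k, secondPartial (fun y => p y * K y l * K y k) x l k =
          diverg (fun y => p y • K y) x * hhat) ∧
      (-diverg (fun y => p y • u y) x +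
        (1 / 2 : ℝ) * ∑ l, ∑ k, secondPartial (fun y => p y * K y l * K y k) x l k =
          -(h x - hhat) * hhat * p x) := by
  subst hu hΩ
  intro x
  -- basic differentiability facts
  have hpd : Differentiable ℝ p := hp.differentiable two_ne_zero
  have hhd : Differentiable ℝ h := hh.differentiable two_ne_zero
  have hKc : ∀ k, ContDiff ℝ 2 (fun y => K y k) := fun k =>
    ((EuclideanSpace.proj (𝕜 := ℝ) k).contDiff.comp hK :
      ContDiff ℝ 2 fun y => EuclideanSpace.proj (𝕜 := ℝ) k (K y))
  have hKd : ∀ k, Differentiable ℝ (fun y => K y k) := fun k => (hKc k).differentiable two_ne_zero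
  have hDK : ∀ l k, Differentiable ℝ
      (fun y => fderiv ℝ (fun z => K z l) y (EuclideanSpace.single k 1)) := fun l k =>
    ((((hKc l).fderiv_right (m := 1) one_add_one_eq_two.le).clm_apply contDiff_const).differentiable one_ne_zero)
  have hDp : ∀ k, Differentiable ℝ (fun y => fderiv ℝ p y (EuclideanSpace.single k 1)) := fun k =>
    (((hp.fderiv_right (m := 1) one_add_one_eq_two.le).clm_apply contDiff_const).differentiable one_ne_zero)
  have hT : ∀ l, Differentiable ℝ
      (fun y => ∑ k, K y k * fderiv ℝ (fun z => K z l) y (EuclideanSpace.single k 1)) := fun l =>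
    Differentiable.fun_sum (fun k _ => (hKd k).mul (hDK l k))
  -- expanded gain equation
  have hgain' : ∀ y, ∑ k, (fderiv ℝ p y (EuclideanSpace.single k 1) * K y k +
      p y * fderiv ℝ (fun z => K z k) y (EuclideanSpace.single k 1)) = -(h y - hhat) * p y := by
    intro y
    rw [← hgain y]
    unfold diverg
    exact Finset.sum_congr rfl fun k _ =>
      (pd_mul_s18 (f := p) (g := fun z => K z k) (hpd y) (hKd k y)).symm
  -- the sum-apply lemma
  have happly : ∀ (c : Fin d → ℝ) (j : Fin d),
      (∑ l, c l • (EuclideanSpace.single l 1 : EuclideanSpace ℝ (Fin d))) j = c j := by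
    intro c j
    rw [show ((∑ l, c l • (EuclideanSpace.single l 1 : EuclideanSpace ℝ (Fin d))) j) =
      EuclideanSpace.proj (𝕜 := ℝ) j
        (∑ l, c l • (EuclideanSpace.single l 1 : EuclideanSpace ℝ (Fin d))) from rfl, map_sum]
    simp [EuclideanSpace.single_apply]
  -- component of p • u
  have hdivu : diverg (fun y => p y • ((-(1 / 2 : ℝ) * (h y + hhat)) • K y +
        ∑ l, ((1 / 2 : ℝ) * ∑ k, K y k * fderiv ℝ (fun z => K z l) y
          (EuclideanSpace.single k 1)) • EuclideanSpace.single l 1)) x =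
      ∑ l, fderiv ℝ (fun y => p y * (-(1 / 2 : ℝ) * (h y + hhat) * K y l +
        (1 / 2 : ℝ) * ∑ k, K y k * fderiv ℝ (fun z => K z l) y
          (EuclideanSpace.single k 1))) x (EuclideanSpace.single l 1) := by
    unfold diverg
    refine Finset.sum_congr rfl fun l _ =>
      congrArg (fun f => fderiv ℝ f x (EuclideanSpace.single l 1)) (funext fun y => ?_)
    show p y * ((-(1 / 2 : ℝ) * (h y + hhat)) * K y l +
      (∑ l', ((1 / 2 : ℝ) * ∑ k, K y k * fderiv ℝ (fun z => K z l') y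
        (EuclideanSpace.single k 1)) • (EuclideanSpace.single l' 1 : EuclideanSpace ℝ (Fin d))) l) = _
    rw [happly]
  -- the per-coordinate identity
  have keyl : ∀ l, -(fderiv ℝ (fun y => p y * (-(1 / 2 : ℝ) * (h y + hhat) * K y l +
        (1 / 2 : ℝ) * ∑ k, K y k * fderiv ℝ (fun z => K z l) y
          (EuclideanSpace.single k 1))) x (EuclideanSpace.single l 1)) +
      (1 / 2 : ℝ) * ∑ k, secondPartial (fun y => p y * K y l * K y k) x l k =
      fderiv ℝ (fun y => p y * K y l) x (EuclideanSpace.single l 1) * hhat := by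
    intro l
    -- step 1: compute inner derivatives of the second partials
    have hSP : ∑ k, secondPartial (fun y => p y * K y l * K y k) x l k =
        fderiv ℝ (fun y => ∑ k, ((fderiv ℝ p y (EuclideanSpace.single k 1) * K y l +
          p y * fderiv ℝ (fun z => K z l) y (EuclideanSpace.single k 1)) * K y k +
          p y * K y l * fderiv ℝ (fun z => K z k) y (EuclideanSpace.single k 1))) x
          (EuclideanSpace.single l 1) := by
      rw [fderiv_fun_sum (A := fun k y => ((fderiv ℝ p y (EuclideanSpace.single k 1) * K y l +
          p y * fderiv ℝ (fun z => K z l) y (EuclideanSpace.single k 1)) * K y k +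
          p y * K y l * fderiv ℝ (fun z => K z k) y (EuclideanSpace.single k 1))) (fun k _ => ((((hDp k).mul (hKd l)).add (hpd.mul (hDK l k))).mul
        (hKd k)).add (((hpd.mul (hKd l)).mul (hDK k k))) |>.differentiableAt),
        ContinuousLinearMap.sum_apply]
      refine Finset.sum_congr rfl fun k _ => ?_
      unfold secondPartial
      refine congrArg (fun f => fderiv ℝ f x (EuclideanSpace.single l 1)) (funext fun y => ?_)
      have h1 : fderiv ℝ (fun z => p z * K z l * K z k) y (EuclideanSpace.single k 1) =
          fderiv ℝ (fun z => p z * K z l) y (EuclideanSpace.single k 1) * K y k +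
          p y * K y l * fderiv ℝ (fun z => K z k) y (EuclideanSpace.single k 1) :=
        pd_mul_s18 ((hpd y).mul (hKd l y)) (hKd k y)
      have h2 : fderiv ℝ (fun z => p z * K z l) y (EuclideanSpace.single k 1) =
          fderiv ℝ p y (EuclideanSpace.single k 1) * K y l +
          p y * fderiv ℝ (fun z => K z l) y (EuclideanSpace.single k 1) :=
        pd_mul_s18 (hpd y) (hKd l y)
      rw [h1, h2]
    -- step 2: rewrite the summed function using the gain equation
    have hfun : (fun y => ∑ k, ((fderiv ℝ p y (EuclideanSpace.single k 1) * K y l +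
          p y * fderiv ℝ (fun z => K z l) y (EuclideanSpace.single k 1)) * K y k +
          p y * K y l * fderiv ℝ (fun z => K z k) y (EuclideanSpace.single k 1))) =
        (fun y => -(h y - hhat) * p y * K y l +
          p y * ∑ k, K y k * fderiv ℝ (fun z => K z l) y (EuclideanSpace.single k 1)) := by
      funext y
      have h3 : ∑ k, ((fderiv ℝ p y (EuclideanSpace.single k 1) * K y l +
            p y * fderiv ℝ (fun z => K z l) y (EuclideanSpace.single k 1)) * K y k +
            p y * K y l * fderiv ℝ (fun z => K z k) y (EuclideanSpace.single k 1)) =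
          K y l * (∑ k, (fderiv ℝ p y (EuclideanSpace.single k 1) * K y k +
            p y * fderiv ℝ (fun z => K z k) y (EuclideanSpace.single k 1))) +
          p y * ∑ k, K y k * fderiv ℝ (fun z => K z l) y (EuclideanSpace.single k 1) := by
        rw [Finset.mul_sum, Finset.mul_sum, ← Finset.sum_add_distrib]
        exact Finset.sum_congr rfl fun k _ => by ring
      rw [h3, hgain' y]
      ring
    rw [hSP, hfun]
    -- step 3: linear-combination argument
    have hphi : Differentiable ℝ (fun y => p y * (-(1 / 2 : ℝ) * (h y + hhat) * K y l +
        (1 / 2 : ℝ) * ∑ k, K y k * fderiv ℝ (fun z => K z l) y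
          (EuclideanSpace.single k 1))) :=
      hpd.mul ((((differentiable_const _).mul (hhd.add_const _)).mul (hKd l)).add
        ((differentiable_const _).mul (hT l)))
    have hpsi : Differentiable ℝ (fun y => -(h y - hhat) * p y * K y l +
        p y * ∑ k, K y k * fderiv ℝ (fun z => K z l) y (EuclideanSpace.single k 1)) :=
      ((((hhd.sub_const _).neg).mul hpd).mul (hKd l)).add (hpd.mul (hT l))
    have hcomb : (fun y => (1 / 2 : ℝ) * (-(h y - hhat) * p y * K y l +
          p y * ∑ k, K y k * fderiv ℝ (fun z => K z l) y (EuclideanSpace.single k 1)) -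
        p y * (-(1 / 2 : ℝ) * (h y + hhat) * K y l +
          (1 / 2 : ℝ) * ∑ k, K y k * fderiv ℝ (fun z => K z l) y
            (EuclideanSpace.single k 1))) =
        (fun y => p y * K y l * hhat) := funext fun y => by ring
    have hd1 : fderiv ℝ (fun y => (1 / 2 : ℝ) * (-(h y - hhat) * p y * K y l +
          p y * ∑ k, K y k * fderiv ℝ (fun z => K z l) y (EuclideanSpace.single k 1)) -
        p y * (-(1 / 2 : ℝ) * (h y + hhat) * K y l +
          (1 / 2 : ℝ) * ∑ k, K y k * fderiv ℝ (fun z => K z l) y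
            (EuclideanSpace.single k 1))) x (EuclideanSpace.single l 1) =
        (1 / 2 : ℝ) * fderiv ℝ (fun y => -(h y - hhat) * p y * K y l +
          p y * ∑ k, K y k * fderiv ℝ (fun z => K z l) y (EuclideanSpace.single k 1)) x
            (EuclideanSpace.single l 1) -
        fderiv ℝ (fun y => p y * (-(1 / 2 : ℝ) * (h y + hhat) * K y l +
          (1 / 2 : ℝ) * ∑ k, K y k * fderiv ℝ (fun z => K z l) y
            (EuclideanSpace.single k 1))) x (EuclideanSpace.single l 1) := by
      rw [fderiv_fun_sub ((hpsi x).const_mul _) (hphi x), fderiv_const_mul (hpsi x)]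
      simp [smul_eq_mul]
    have hd2 : fderiv ℝ (fun y => p y * K y l * hhat) x (EuclideanSpace.single l 1) =
        fderiv ℝ (fun y => p y * K y l) x (EuclideanSpace.single l 1) * hhat := by
      rw [fderiv_mul_const (c := fun y => p y * K y l) ((hpd x).mul (hKd l x))]
      simp [smul_eq_mul]
      ring
    have := hd1.symm.trans ((congrArg (fun f => fderiv ℝ f x (EuclideanSpace.single l 1))
      hcomb).trans hd2)
    linarith
  -- assemble
  have key : -diverg (fun y => p y • ((-(1 / 2 : ℝ) * (h y + hhat)) • K y +
        ∑ l, ((1 / 2 : ℝ) * ∑ k, K y k * fderiv ℝ (fun z => K z l) y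
          (EuclideanSpace.single k 1)) • EuclideanSpace.single l 1)) x +
      (1 / 2 : ℝ) * ∑ l, ∑ k, secondPartial (fun y => p y * K y l * K y k) x l k =
      diverg (fun y => p y • K y) x * hhat := by
    rw [hdivu]
    unfold diverg
    rw [Finset.sum_mul, ← Finset.sum_neg_distrib, Finset.mul_sum, ← Finset.sum_add_distrib]
    refine Finset.sum_congr rfl fun l _ => ?_
    have hc : fderiv ℝ (fun y => (p y • K y) l) x (EuclideanSpace.single l 1) =
        fderiv ℝ (fun y => p y * K y l) x (EuclideanSpace.single l 1) := rfl
    rw [hc]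
    exact keyl l
  refine ⟨key, key.trans ?_⟩
  rw [hgain x]
  ring
end

section
/- (Exactness of the feedback particle filter, deterministic coefficient form.) Let p : ℝ^d → (0,∞) be twice continuously differentiable, let h : ℝ^d → ℝ be twice continuously differentiable, let ĥ ∈ ℝ, and let K : ℝ^d → ℝ^d be twice continuously differentiable with ∇·(pK) = −(h − ĥ) p pointwise. With Ω_l = (1/2) Σ_k K_k ∂K_l/∂x_k and u = −(1/2) K (h + ĥ) + Ω, for every a ∈ ℝ and every x ∈ ℝ^d the following identity holds: −∇·(pK)(x) · a − ∇·(pu)(x) + (1/2) Σ_{l,k=1}^d ∂²( p K_l K_k )/∂x_l ∂x_k (x) = ( h(x) − ĥ )( a − ĥ ) p(x). That is, the coefficients (in the observation increment a and in time) of the forward equation of the controlled particle system coincide exactly with the coefficients of the Kushner–Stratonovich equation dp* = (h − ĥ)(dZ_t − ĥ dt) p*. -/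
open MeasureTheory Real

/-- Auxiliary: the `l`-component of `Ω`, as a scalar field. -/
noncomputable def Omc {d : ℕ} (K : EuclideanSpace ℝ (Fin d) → EuclideanSpace ℝ (Fin d))
    (l : Fin d) (y : EuclideanSpace ℝ (Fin d)) : ℝ :=
  (1 / 2 : ℝ) * ∑ k, K y k * fderiv ℝ (fun z => K z l) y (EuclideanSpace.single k 1)

private lemma fd_mul {E : Type*} [NormedAddCommGroup E] [NormedSpace ℝ E]
    {f g : E → ℝ} {x : E} (hf : DifferentiableAt ℝ f x) (hg : DifferentiableAt ℝ g x) (v : E) :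
    fderiv ℝ (fun y => f y * g y) x v = f x * fderiv ℝ g x v + g x * fderiv ℝ f x v := by
  rw [fderiv_fun_mul hf hg]; simp

private lemma fd_add {E : Type*} [NormedAddCommGroup E] [NormedSpace ℝ E]
    {f g : E → ℝ} {x : E} (hf : DifferentiableAt ℝ f x) (hg : DifferentiableAt ℝ g x) (v : E) :
    fderiv ℝ (fun y => f y + g y) x v = fderiv ℝ f x v + fderiv ℝ g x v := by
  rw [fderiv_fun_add hf hg]; rfl

private lemma fd_cmul {E : Type*} [NormedAddCommGroup E] [NormedSpace ℝ E]
    {f : E → ℝ} {x : E} (hf : DifferentiableAt ℝ f x) (c : ℝ) (v : E) :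
    fderiv ℝ (fun y => c * f y) x v = c * fderiv ℝ f x v := by
  rw [fderiv_const_mul hf c]; simp

private lemma fd_affine {E : Type*} [NormedAddCommGroup E] [NormedSpace ℝ E]
    {f : E → ℝ} {x : E} (hf : DifferentiableAt ℝ f x) (b c : ℝ) (v : E) :
    fderiv ℝ (fun y => b * (f y + c)) x v = b * fderiv ℝ f x v := by
  have h1 : (fun y => b * (f y + c)) = fun y => b * f y + b * c := funext fun y => by ring
  rw [h1, fderiv_add_const, fderiv_const_mul hf]; simp

private lemma fd_negsub {E : Type*} [NormedAddCommGroup E] [NormedSpace ℝ E]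
    {f : E → ℝ} {x : E} (hf : DifferentiableAt ℝ f x) (c : ℝ) (v : E) :
    fderiv ℝ (fun y => -(f y - c)) x v = -fderiv ℝ f x v := by
  have h1 : (fun y => -(f y - c)) = fun y => (-1 : ℝ) * (f y + (-c)) := funext fun y => by ring
  rw [h1, fd_affine hf (-1) (-c) v]; ring

private lemma Omc_contDiff {d : ℕ} {K : EuclideanSpace ℝ (Fin d) → EuclideanSpace ℝ (Fin d)}
    (hK : ContDiff ℝ 2 K) (l : Fin d) : ContDiff ℝ 1 (Omc K l) := by
  unfold Omc
  exact contDiff_const.mul (ContDiff.sum fun k _ =>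
    ((contDiff_euclidean.mp hK k).of_le one_le_two).mul
      (((contDiff_euclidean.mp hK l).fderiv_right (by norm_num)).clm_apply contDiff_const))

/-- **Exactness of the feedback particle filter (deterministic coefficient form).**
Let `p > 0` and `h` be `C²`, `ĥ ∈ ℝ`, and let the `C²` gain `K` solve
`∇·(pK) = -(h - ĥ)p` pointwise.  With `Ω_l = (1/2) ∑_k K_k ∂K_l/∂x_k` and
`u = -(1/2)K(h + ĥ) + Ω`, for every `a ∈ ℝ` and every `x`,
`-∇·(pK) a - ∇·(pu) + (1/2) ∑_{l,k} ∂²(p K_l K_k)/∂x_l∂x_k = (h - ĥ)(a - ĥ) p`;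
i.e. the coefficients of the forward equation of the controlled particle system
coincide with those of the Kushner–Stratonovich equation. -/
theorem fpf_exactness_coefficients
    {d : ℕ} (p h : EuclideanSpace ℝ (Fin d) → ℝ)
    (hp : ContDiff ℝ 2 p) (hppos : ∀ x, 0 < p x)
    (hh : ContDiff ℝ 2 h) (hhat : ℝ)
    (K : EuclideanSpace ℝ (Fin d) → EuclideanSpace ℝ (Fin d)) (hK : ContDiff ℝ 2 K)
    (hgain : ∀ x, diverg (fun y => p y • K y) x = -(h x - hhat) * p x)
    (Ω u : EuclideanSpace ℝ (Fin d) → EuclideanSpace ℝ (Fin d))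
    (hΩ : Ω = fun x => ∑ l, ((1 / 2 : ℝ) *
      ∑ k, K x k * fderiv ℝ (fun y => K y l) x (EuclideanSpace.single k 1)) •
        EuclideanSpace.single l 1)
    (hu : u = fun x => (-(1 / 2 : ℝ) * (h x + hhat)) • K x + Ω x) :
    ∀ (a : ℝ) (x : EuclideanSpace ℝ (Fin d)),
      -diverg (fun y => p y • K y) x * a - diverg (fun y => p y • u y) x +
        (1 / 2 : ℝ) * ∑ l, ∑ k, secondPartial (fun y => p y * K y l * K y k) x l k =
      (h x - hhat) * (a - hhat) * p x := by
  intro a x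
  classical
  set e : Fin d → EuclideanSpace ℝ (Fin d) := fun j => EuclideanSpace.single j 1 with he
  -- basic smoothness facts
  have hp1 : ContDiff ℝ 1 p := hp.of_le one_le_two
  have hh1 : ContDiff ℝ 1 h := hh.of_le one_le_two
  have hKl2 : ∀ l, ContDiff ℝ 2 (fun y => K y l) := contDiff_euclidean.mp hK
  have hKl1 : ∀ l, ContDiff ℝ 1 (fun y => K y l) := fun l => (hKl2 l).of_le one_le_two
  have hpK1 : ∀ l, ContDiff ℝ 1 (fun y => p y * K y l) := fun l => hp1.mul (hKl1 l)
  have hpKK2 : ∀ l k, ContDiff ℝ 2 (fun y => p y * K y l * K y k) :=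
    fun l k => (hp.mul (hKl2 l)).mul (hKl2 k)
  have hO1 : ∀ l, ContDiff ℝ 1 (Omc K l) := fun l => Omc_contDiff hK l
  have hpO1 : ∀ l, ContDiff ℝ 1 (fun y => p y * Omc K l y) := fun l => hp1.mul (hO1 l)
  have hDpKK1 : ∀ l k, ContDiff ℝ 1 (fun y => fderiv ℝ (fun z => p z * K z l * K z k) y (e k)) :=
    fun l k => ((hpKK2 l k).fderiv_right (by norm_num)).clm_apply contDiff_const
  -- the gain equation, componentwise
  have hdivpK : ∀ y, (∑ j, fderiv ℝ (fun z => p z * K z j) y (e j)) = -(h y - hhat) * p y := by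
    intro y
    have hg := hgain y
    simp only [diverg] at hg
    have hfun : ∀ j : Fin d, (fun z => (p z • K z) j) = fun z => p z * K z j := fun j => rfl
    simp only [hfun, ← he] at hg
    exact hg
  -- the Ω component identity
  have hΩcomp : ∀ (y : EuclideanSpace ℝ (Fin d)) (j : Fin d), Ω y j = Omc K j y := by
    intro y j
    have h0 : Ω y = ∑ l, ((1 / 2 : ℝ) *
        ∑ k, K y k * fderiv ℝ (fun z => K z l) y (EuclideanSpace.single k 1)) •
          EuclideanSpace.single l 1 := by rw [hΩ]
    rw [h0]
    rw [show ((∑ l, ((1 / 2 : ℝ) *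
        ∑ k, K y k * fderiv ℝ (fun z => K z l) y (EuclideanSpace.single k 1)) •
          EuclideanSpace.single l 1) j)
      = ∑ l, (((1 / 2 : ℝ) *
        ∑ k, K y k * fderiv ℝ (fun z => K z l) y (EuclideanSpace.single k 1)) •
          EuclideanSpace.single l (1:ℝ)) j from by rw [WithLp.ofLp_sum, Finset.sum_apply]]
    simp [EuclideanSpace.single_apply, Omc]
  -- Step A: row sums of the Hessian term
  have stepA : ∀ (l : Fin d) (y : EuclideanSpace ℝ (Fin d)),
      (∑ k, fderiv ℝ (fun z => p z * K z l * K z k) y (e k))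
        = -(h y - hhat) * (p y * K y l) + 2 * (p y * Omc K l y) := by
    intro l y
    have hre : ∀ k : Fin d, (fun z => p z * K z l * K z k) = fun z => K z l * (p z * K z k) :=
      fun k => funext fun z => by ring
    have h1 : ∀ k : Fin d, fderiv ℝ (fun z => p z * K z l * K z k) y (e k)
        = K y l * fderiv ℝ (fun z => p z * K z k) y (e k)
          + (p y * K y k) * fderiv ℝ (fun z => K z l) y (e k) := by
      intro k
      rw [hre k]
      exact fd_mul ((hKl1 l).differentiable one_ne_zero y) ((hpK1 k).differentiable one_ne_zero y) (e k)
    calc (∑ k, fderiv ℝ (fun z => p z * K z l * K z k) y (e k))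
        = ∑ k, (K y l * fderiv ℝ (fun z => p z * K z k) y (e k)
            + (p y * K y k) * fderiv ℝ (fun z => K z l) y (e k)) :=
          Finset.sum_congr rfl fun k _ => h1 k
      _ = K y l * (∑ k, fderiv ℝ (fun z => p z * K z k) y (e k))
            + p y * ∑ k, K y k * fderiv ℝ (fun z => K z l) y (e k) := by
          rw [Finset.sum_add_distrib, ← Finset.mul_sum,
            Finset.mul_sum Finset.univ
              (fun k => K y k * fderiv ℝ (fun z => K z l) y (e k)) (p y)]
          congr 1
          exact Finset.sum_congr rfl fun k _ => by ring
      _ = -(h y - hhat) * (p y * K y l) + 2 * (p y * Omc K l y) := by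
          rw [hdivpK y]; simp only [Omc, he]; ring
  -- Step B: the full second-order sum
  have hsecond : (∑ l, ∑ k, secondPartial (fun y => p y * K y l * K y k) x l k)
      = (-(h x - hhat)) * (-(h x - hhat) * p x)
        + (-1 : ℝ) * (∑ l, p x * K x l * fderiv ℝ h x (e l))
        + 2 * (∑ l, fderiv ℝ (fun y => p y * Omc K l y) x (e l)) := by
    have hrow : ∀ l : Fin d, (∑ k, secondPartial (fun y => p y * K y l * K y k) x l k)
        = (-(h x - hhat)) * fderiv ℝ (fun z => p z * K z l) x (e l)
          + (-1 : ℝ) * (p x * K x l * fderiv ℝ h x (e l))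
          + 2 * fderiv ℝ (fun y => p y * Omc K l y) x (e l) := by
      intro l
      have h1 : (∑ k, secondPartial (fun y => p y * K y l * K y k) x l k)
          = fderiv ℝ (fun y => ∑ k, fderiv ℝ (fun z => p z * K z l * K z k) y (e k)) x (e l) := by
        rw [fderiv_fun_sum (fun k _ => ((hDpKK1 l k).differentiable one_ne_zero).differentiableAt)]
        rw [ContinuousLinearMap.sum_apply]
        rfl
      have hfun : (fun y => ∑ k, fderiv ℝ (fun z => p z * K z l * K z k) y (e k))
          = fun y => -(h y - hhat) * (p y * K y l) + 2 * (p y * Omc K l y) :=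
        funext fun y => stepA l y
      have hf1 : DifferentiableAt ℝ (fun y => -(h y - hhat) * (p y * K y l)) x :=
        ((((hh1.sub contDiff_const).neg).mul (hpK1 l)).differentiable one_ne_zero).differentiableAt
      have hf2 : DifferentiableAt ℝ (fun y => (2:ℝ) * (p y * Omc K l y)) x :=
        ((contDiff_const.mul (hpO1 l)).differentiable one_ne_zero).differentiableAt
      have e2 : fderiv ℝ (fun y => -(h y - hhat) * (p y * K y l) + 2 * (p y * Omc K l y)) x (e l)
          = fderiv ℝ (fun y => -(h y - hhat) * (p y * K y l)) x (e l)
            + fderiv ℝ (fun y => (2:ℝ) * (p y * Omc K l y)) x (e l) := fd_add hf1 hf2 (e l)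
      have e3 : fderiv ℝ (fun y => -(h y - hhat) * (p y * K y l)) x (e l)
          = (-(h x - hhat)) * fderiv ℝ (fun z => p z * K z l) x (e l)
            + (p x * K x l) * fderiv ℝ (fun y => -(h y - hhat)) x (e l) :=
        fd_mul (((hh1.sub contDiff_const).neg.differentiable one_ne_zero).differentiableAt)
          (((hpK1 l).differentiable one_ne_zero).differentiableAt) (e l)
      have e4 : fderiv ℝ (fun y => -(h y - hhat)) x (e l) = -fderiv ℝ h x (e l) :=
        fd_negsub ((hh1.differentiable one_ne_zero).differentiableAt) hhat (e l)
      have e5 : fderiv ℝ (fun y => (2:ℝ) * (p y * Omc K l y)) x (e l)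
          = 2 * fderiv ℝ (fun y => p y * Omc K l y) x (e l) :=
        fd_cmul (((hpO1 l).differentiable one_ne_zero).differentiableAt) 2 (e l)
      rw [h1, hfun, e2, e3, e4, e5]; ring
    calc (∑ l, ∑ k, secondPartial (fun y => p y * K y l * K y k) x l k)
        = ∑ l, ((-(h x - hhat)) * fderiv ℝ (fun z => p z * K z l) x (e l)
            + (-1 : ℝ) * (p x * K x l * fderiv ℝ h x (e l))
            + 2 * fderiv ℝ (fun y => p y * Omc K l y) x (e l)) :=
          Finset.sum_congr rfl fun l _ => hrow l
      _ = (-(h x - hhat)) * (∑ l, fderiv ℝ (fun z => p z * K z l) x (e l))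
            + (-1 : ℝ) * (∑ l, p x * K x l * fderiv ℝ h x (e l))
            + 2 * (∑ l, fderiv ℝ (fun y => p y * Omc K l y) x (e l)) := by
          rw [Finset.sum_add_distrib, Finset.sum_add_distrib,
            ← Finset.mul_sum, ← Finset.mul_sum, ← Finset.mul_sum]
      _ = _ := by rw [hdivpK x]
  -- Step C: the divergence of p·u
  have hdivpu : diverg (fun y => p y • u y) x
      = (-(1 / 2 : ℝ) * (h x + hhat)) * (-(h x - hhat) * p x)
        + (-(1 / 2 : ℝ)) * (∑ l, p x * K x l * fderiv ℝ h x (e l))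
        + ∑ l, fderiv ℝ (fun y => p y * Omc K l y) x (e l) := by
    have hcomp : ∀ j : Fin d, (fun y => (p y • u y) j)
        = fun y => (-(1 / 2 : ℝ) * (h y + hhat)) * (p y * K y j) + p y * Omc K j y := by
      intro j
      funext y
      have huy : u y = (-(1 / 2 : ℝ) * (h y + hhat)) • K y + Ω y := by rw [hu]
      have h1 : (p y • u y) j = p y * u y j := rfl
      have h2 : u y j = (-(1 / 2 : ℝ) * (h y + hhat)) * K y j + Ω y j := by
        rw [show u y j = ((-(1 / 2 : ℝ) * (h y + hhat)) • K y + Ω y) j from by rw [huy]]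
        rfl
      rw [h1, h2, hΩcomp y j]
      ring
    have hkey : ∀ j : Fin d, fderiv ℝ (fun y => (p y • u y) j) x (e j)
        = (-(1 / 2 : ℝ) * (h x + hhat)) * fderiv ℝ (fun z => p z * K z j) x (e j)
          + (-(1 / 2 : ℝ)) * (p x * K x j * fderiv ℝ h x (e j))
          + fderiv ℝ (fun y => p y * Omc K j y) x (e j) := by
      intro j
      have hfa : DifferentiableAt ℝ (fun y => -(1 / 2 : ℝ) * (h y + hhat)) x :=
        ((contDiff_const.mul (hh1.add contDiff_const)).differentiable one_ne_zero).differentiableAt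
      have hfb : DifferentiableAt ℝ (fun y => (-(1 / 2 : ℝ) * (h y + hhat)) * (p y * K y j)) x :=
        (hfa.mul (((hpK1 j).differentiable one_ne_zero).differentiableAt))
      have hfc : DifferentiableAt ℝ (fun y => p y * Omc K j y) x :=
        ((hpO1 j).differentiable one_ne_zero).differentiableAt
      have e1 : fderiv ℝ (fun y => (-(1 / 2 : ℝ) * (h y + hhat)) * (p y * K y j)
            + p y * Omc K j y) x (e j)
          = fderiv ℝ (fun y => (-(1 / 2 : ℝ) * (h y + hhat)) * (p y * K y j)) x (e j)
            + fderiv ℝ (fun y => p y * Omc K j y) x (e j) := fd_add hfb hfc (e j)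
      have e2 : fderiv ℝ (fun y => (-(1 / 2 : ℝ) * (h y + hhat)) * (p y * K y j)) x (e j)
          = (-(1 / 2 : ℝ) * (h x + hhat)) * fderiv ℝ (fun z => p z * K z j) x (e j)
            + (p x * K x j) * fderiv ℝ (fun y => -(1 / 2 : ℝ) * (h y + hhat)) x (e j) :=
        fd_mul hfa (((hpK1 j).differentiable one_ne_zero).differentiableAt) (e j)
      have e3 : fderiv ℝ (fun y => -(1 / 2 : ℝ) * (h y + hhat)) x (e j)
          = -(1 / 2 : ℝ) * fderiv ℝ h x (e j) :=
        fd_affine ((hh1.differentiable one_ne_zero).differentiableAt) (-(1 / 2 : ℝ)) hhat (e j)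
      rw [hcomp j, e1, e2, e3]; ring
    calc diverg (fun y => p y • u y) x
        = ∑ j, fderiv ℝ (fun y => (p y • u y) j) x (e j) := rfl
      _ = ∑ j, ((-(1 / 2 : ℝ) * (h x + hhat)) * fderiv ℝ (fun z => p z * K z j) x (e j)
            + (-(1 / 2 : ℝ)) * (p x * K x j * fderiv ℝ h x (e j))
            + fderiv ℝ (fun y => p y * Omc K j y) x (e j)) :=
          Finset.sum_congr rfl fun j _ => hkey j
      _ = (-(1 / 2 : ℝ) * (h x + hhat)) * (∑ l, fderiv ℝ (fun z => p z * K z l) x (e l))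
            + (-(1 / 2 : ℝ)) * (∑ l, p x * K x l * fderiv ℝ h x (e l))
            + ∑ l, fderiv ℝ (fun y => p y * Omc K l y) x (e l) := by
          rw [Finset.sum_add_distrib, Finset.sum_add_distrib,
            ← Finset.mul_sum, ← Finset.mul_sum]
      _ = _ := by rw [hdivpK x]
  rw [hgain x, hdivpu, hsecond]
  ring
end
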